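/- arXiv:2110.00231 — 3 statements merged into one kernel-verified Lean document; each statement's English description precedes it below -/
import Mathlib

section
/- For any nonnegative integer m, the alternating sum ∑_{a+b=2m+1} (−1)^b · ζ({1}^a, b+2) equals 0, where the sum is over nonnegative integers a, b with a+b = 2m+1, and {1}^a means a repetitions of the argument 1. -/
open Filter

/-- Limit of partial sums (handles conditionally convergent series). -/
noncomputable def plim (f : ℕ → ℝ) : ℝ := limUnder atTop f

/-- Riemann zeta value `ζ(s) = ∑_{k ≥ 1} 1/k^s`. -/
noncomputable def zetaV (s : ℕ) : ℝ :=
  plim fun N => ∑ k ∈ Finset.Ico 1 (N + 1), 1 / (k : ℝ) ^ s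

/-- Alternating zeta value `ζ̄(s) = ∑_{k ≥ 1} (-1)^k/k^s`. -/
noncomputable def zetaBar (s : ℕ) : ℝ :=
  plim fun N => ∑ k ∈ Finset.Ico 1 (N + 1), (-1 : ℝ) ^ k / (k : ℝ) ^ s

/-- Double zeta value `ζ(a,b) = ∑_{1 ≤ k₁ < k₂} 1/(k₁^a k₂^b)`. -/
noncomputable def zeta2 (a b : ℕ) : ℝ :=
  plim fun N => ∑ k₂ ∈ Finset.Ico 1 (N + 1), ∑ k₁ ∈ Finset.Ico 1 k₂,
    1 / ((k₁ : ℝ) ^ a * (k₂ : ℝ) ^ b)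

/-- `ζ(a, b̄) = ∑_{1 ≤ k₁ < k₂} (-1)^{k₂}/(k₁^a k₂^b)` (sign on the outer index). -/
noncomputable def zeta2barO (a b : ℕ) : ℝ :=
  plim fun N => ∑ k₂ ∈ Finset.Ico 1 (N + 1), ∑ k₁ ∈ Finset.Ico 1 k₂,
    (-1 : ℝ) ^ k₂ / ((k₁ : ℝ) ^ a * (k₂ : ℝ) ^ b)

/-- `ζ(ā, b) = ∑_{1 ≤ k₁ < k₂} (-1)^{k₁}/(k₁^a k₂^b)` (sign on the inner index). -/
noncomputable def zeta2barI (a b : ℕ) : ℝ :=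
  plim fun N => ∑ k₂ ∈ Finset.Ico 1 (N + 1), ∑ k₁ ∈ Finset.Ico 1 k₂,
    (-1 : ℝ) ^ k₁ / ((k₁ : ℝ) ^ a * (k₂ : ℝ) ^ b)

/-- `ζ(ā, b̄) = ∑_{1 ≤ k₁ < k₂} (-1)^{k₁+k₂}/(k₁^a k₂^b)`. -/
noncomputable def zeta2barB (a b : ℕ) : ℝ :=
  plim fun N => ∑ k₂ ∈ Finset.Ico 1 (N + 1), ∑ k₁ ∈ Finset.Ico 1 k₂,
    (-1 : ℝ) ^ (k₁ + k₂) / ((k₁ : ℝ) ^ a * (k₂ : ℝ) ^ b)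

/-- Multiple zeta value `ζ(α₁,…,α_r)`. -/
noncomputable def mzv {r : ℕ} (α : Fin r → ℕ) : ℝ :=
  ∑' k : {f : Fin r → ℕ // StrictMono f ∧ ∀ i, 1 ≤ f i},
    ∏ i, 1 / ((k.1 i : ℝ) ^ α i)

/-- Multiple zeta-star value `ζ⋆(α₁,…,α_r)`. -/
noncomputable def mzvStar {r : ℕ} (α : Fin r → ℕ) : ℝ :=
  ∑' k : {f : Fin r → ℕ // Monotone f ∧ ∀ i, 1 ≤ f i},
    ∏ i, 1 / ((k.1 i : ℝ) ^ α i)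

/-- Height-one MZV `ζ({1}^a, b+2)`. -/
noncomputable def heightOne (a b : ℕ) : ℝ :=
  mzv (Fin.snoc (fun _ : Fin a => 1) (b + 2))

/-- Height-one zeta-star value `ζ⋆({1}^a, b+2)`. -/
noncomputable def heightOneStar (a b : ℕ) : ℝ :=
  mzvStar (Fin.snoc (fun _ : Fin a => 1) (b + 2))

open Real Finset
open scoped ENNReal

section MZVAux

noncomputable def er : ℕ → ℕ → ℝ
  | 0, _ => 1
  | b+1, n => ∑ k ∈ Finset.Ico 1 n, (1/(k:ℝ)) * er b k

lemma er_zero (n : ℕ) : er 0 n = 1 := rfl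
lemma er_succ (b n : ℕ) : er (b+1) n = ∑ k ∈ Finset.Ico 1 n, (1/(k:ℝ)) * er b k := rfl

lemma er_nonneg (b n : ℕ) : 0 ≤ er b n := by
  induction b generalizing n with
  | zero => simp [er]
  | succ b ih => exact Finset.sum_nonneg fun k _ => mul_nonneg (by positivity) (ih k)

lemma er_mono (b : ℕ) {n n' : ℕ} (h : n ≤ n') : er b n ≤ er b n' := by
  cases b with
  | zero => simp [er]
  | succ b =>
    rw [er_succ, er_succ]
    exact Finset.sum_le_sum_of_subset_of_nonneg (Finset.Ico_subset_Ico le_rfl h)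
      fun k _ _ => mul_nonneg (by positivity) (er_nonneg b k)

lemma er_step (b n : ℕ) : er (b+1) (n+1) = er (b+1) n + (1/(n:ℝ)) * er b n := by
  cases n with
  | zero => simp [er]
  | succ n =>
    rw [er_succ, er_succ, Finset.sum_Ico_succ_top (Nat.succ_le_succ (Nat.zero_le n))]

lemma er_le_pow (b n : ℕ) : er b n ≤ (er 1 n)^b := by
  induction b generalizing n with
  | zero => simp [er]
  | succ b ih =>
    rw [er_succ]
    calc ∑ k ∈ Finset.Ico 1 n, (1/(k:ℝ)) * er b k
        ≤ ∑ k ∈ Finset.Ico 1 n, (1/(k:ℝ)) * (er 1 n)^b := by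
          refine Finset.sum_le_sum fun k hk => ?_
          refine mul_le_mul_of_nonneg_left ?_ (by positivity)
          exact (ih k).trans (pow_le_pow_left₀ (er_nonneg 1 k)
            (er_mono 1 (Finset.mem_Ico.mp hk).2.le) b)
      _ = (er 1 n)^b * er 1 n := by
          rw [← Finset.sum_mul, mul_comm, er_succ]
          simp [er_zero]
      _ = (er 1 n)^(b+1) := by ring

lemma er_one_le (n : ℕ) : er 1 n ≤ 1 + Real.log n := by
  cases n with
  | zero => simp [er]
  | succ n =>
    have h1 : er 1 (n+1) = (harmonic n : ℝ) := by
      rw [er_succ, harmonic_eq_sum_Icc]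
      rw [← Finset.Ico_add_one_right_eq_Icc]
      push_cast
      exact Finset.sum_congr rfl fun k _ => by rw [er_zero, mul_one, one_div]
    rw [h1]
    refine (harmonic_le_one_add_log n).trans ?_
    have : Real.log n ≤ Real.log (n+1) := by
      rcases Nat.eq_zero_or_pos n with h | h
      · simp [h, Real.log_nonneg]
      · exact Real.log_le_log (by positivity) (by push_cast; linarith)
    push_cast at this ⊢
    linarith

noncomputable def AA (m n : ℕ) : ℝ :=
  (Nat.factorial (m-1) : ℝ) * (Nat.factorial (n-1) : ℝ) / (Nat.factorial (m+n-1) : ℝ)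
noncomputable def tt (m n : ℕ) : ℝ :=
  (Nat.factorial (m-1) : ℝ) * (Nat.factorial (n-1) : ℝ) / (Nat.factorial (m+n) : ℝ)

lemma tt_symm (m n : ℕ) : tt m n = tt n m := by
  unfold tt; rw [mul_comm, Nat.add_comm]

lemma tt_nonneg (m n : ℕ) : 0 ≤ tt m n := by unfold tt; positivity
lemma AA_nonneg (m n : ℕ) : 0 ≤ AA m n := by unfold AA; positivity

lemma AA_one (m : ℕ) : AA (m+1) 1 = 1/((m:ℝ)+1) := by
  unfold AA
  simp only [Nat.add_sub_cancel, Nat.sub_self, Nat.factorial_zero, Nat.cast_one, mul_one]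
  rw [Nat.factorial_succ]
  rw [Nat.cast_mul]
  rw [div_eq_iff (by positivity)]
  push_cast
  field_simp

lemma AA_succ_eq (m n : ℕ) : AA (m+1) (n+2) = ((n:ℝ)+1) * tt (m+1) (n+1) := by
  unfold AA tt
  simp only [Nat.add_sub_cancel]
  rw [show m + 1 + (n+2) - 1 = (m + 1 + (n+1)) from by omega,
    show (n+2) - 1 = n+1 from rfl, Nat.factorial_succ n]
  push_cast
  ring

lemma AA_rec (m n : ℕ) : AA (m+1) (n+1) = AA (m+1) (n+2) + ((m:ℝ)+1) * tt (m+1) (n+1) := by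
  unfold AA tt
  simp only [Nat.add_sub_cancel]
  rw [show m + 1 + (n+1) - 1 = m + n + 1 from by omega,
    show m + 1 + (n+2) - 1 = m + n + 2 from by omega,
    show (n+2) - 1 = n+1 from rfl,
    show m + 1 + (n+1) = m + n + 2 from by omega,
    Nat.factorial_succ (n), show m+n+2 = (m+n+1)+1 from rfl, Nat.factorial_succ (m+n+1)]
  have h : (0:ℝ) < Nat.factorial (m+n+1) := by positivity
  push_cast
  field_simp
  ring

lemma AA_le (m n : ℕ) : AA (m+1) (n+1) ≤ 1/((n:ℝ)+1) := by
  unfold AA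
  simp only [Nat.add_sub_cancel]
  rw [show m + 1 + (n+1) - 1 = m + (n+1) from by omega]
  rw [div_le_div_iff₀ (by positivity) (by positivity)]
  have h : (Nat.factorial m * Nat.factorial (n+1) : ℕ) ≤ Nat.factorial (m + (n+1)) :=
    Nat.le_of_dvd (Nat.factorial_pos _) (Nat.factorial_mul_factorial_dvd_factorial_add m (n+1))
  calc (Nat.factorial m : ℝ) * (Nat.factorial n) * ((n:ℝ)+1)
      = (Nat.factorial m : ℝ) * (Nat.factorial (n+1)) := by
        rw [Nat.factorial_succ]; push_cast; ring
    _ ≤ (Nat.factorial (m+(n+1)) : ℝ) := by exact_mod_cast h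
    _ = 1 * (Nat.factorial (m+(n+1)) : ℝ) := by rw [one_mul]

lemma sum_tt (m N : ℕ) :
    ∑ n ∈ Finset.Ico 1 (N+1), tt (m+1) n
      = (1/((m:ℝ)+1)) * (1/((m:ℝ)+1) - AA (m+1) (N+1)) := by
  induction N with
  | zero => simp [AA_one]
  | succ N ih =>
    rw [Finset.sum_Ico_succ_top (Nat.succ_le_succ (Nat.zero_le N)), ih,
      AA_rec m N]
    field_simp
    ring

lemma sum_tt_er (b m N : ℕ) :
    ∑ n ∈ Finset.Ico 1 (N+1), tt (m+1) n * er (b+1) n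
      = (1/((m:ℝ)+1)) * ((∑ n ∈ Finset.Ico 1 (N+1), tt (m+1) n * er b n)
          - AA (m+1) (N+1) * er (b+1) (N+1)) := by
  induction N with
  | zero => simp [er_succ]
  | succ N ih =>
    rw [Finset.sum_Ico_succ_top (Nat.succ_le_succ (Nat.zero_le N)),
      Finset.sum_Ico_succ_top (Nat.succ_le_succ (Nat.zero_le N)), ih,
      er_step (b) (N+1), er_step b N, AA_rec m N, AA_succ_eq m N]
    have hN : ((N:ℝ)+1) ≠ 0 := by positivity
    have hm : ((m:ℝ)+1) ≠ 0 := by positivity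
    field_simp
    push_cast
    ring

lemma tendsto_AA (m : ℕ) : Tendsto (fun N => AA (m+1) (N+1)) atTop (nhds 0) := by
  refine squeeze_zero (fun N => AA_nonneg _ _) (fun N => AA_le m N) ?_
  exact tendsto_one_div_add_atTop_nhds_zero_nat

lemma tendsto_log_pow_div (b : ℕ) :
    Tendsto (fun N : ℕ => (1 + Real.log ((N:ℝ)+1))^b * (1/((N:ℝ)+1))) atTop (nhds 0) := by
  have hx : Tendsto (fun N : ℕ => ((N:ℝ)+1)) atTop atTop :=
    tendsto_atTop_add_const_right atTop 1 tendsto_natCast_atTop_atTop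
  have key : Tendsto (fun x : ℝ => (1 + Real.log x)^b * (1/x)) atTop (nhds 0) := by
    have : ∀ x : ℝ, (1 + Real.log x)^b * (1/x)
        = ∑ k ∈ Finset.range (b+1), (Real.log x ^ (b-k) * (b.choose k)) / x := by
      intro x
      rw [add_pow, Finset.sum_mul]
      refine Finset.sum_congr rfl fun k _ => ?_
      rw [one_pow]
      ring
    simp only [this]
    have h0 : (0:ℝ) = ∑ k ∈ Finset.range (b+1), 0 := by simp
    rw [h0]
    refine tendsto_finset_sum _ fun k _ => ?_
    have := Real.tendsto_pow_log_div_mul_add_atTop 1 0 (b-k) one_ne_zero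
    simp only [one_mul, add_zero] at this
    have h2 := this.mul_const ((b.choose k : ℝ))
    rw [zero_mul] at h2
    refine h2.congr fun x => ?_
    ring
  exact key.comp hx

lemma tendsto_AA_er (m b : ℕ) :
    Tendsto (fun N => AA (m+1) (N+1) * er b (N+1)) atTop (nhds 0) := by
  refine squeeze_zero (f := fun N : ℕ => AA (m+1) (N+1) * er b (N+1)) (g := fun N : ℕ => (1 + Real.log ((N:ℝ)+1))^b * (1/((N:ℝ)+1))) (fun N => mul_nonneg (AA_nonneg _ _) (er_nonneg _ _)) (fun N => ?_) (tendsto_log_pow_div b)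
  have h1 : er b (N+1) ≤ (1 + Real.log ((N:ℝ)+1))^b := by
    refine (er_le_pow b (N+1)).trans ?_
    refine pow_le_pow_left₀ (er_nonneg 1 _) ?_ b
    have := er_one_le (N+1)
    push_cast at this
    exact this
  have h2 : AA (m+1) (N+1) ≤ 1/((N:ℝ)+1) := AA_le m N
  calc AA (m+1) (N+1) * er b (N+1)
      ≤ (1/((N:ℝ)+1)) * (1 + Real.log ((N:ℝ)+1))^b := by
        refine mul_le_mul h2 h1 (er_nonneg _ _) (by positivity)
    _ = (1 + Real.log ((N:ℝ)+1))^b * (1/((N:ℝ)+1)) := by ring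

lemma tendsto_s (m b : ℕ) :
    Tendsto (fun N => ∑ n ∈ Finset.Ico 1 (N+1), tt (m+1) n * er b n) atTop
      (nhds (1/((m:ℝ)+1)^(b+2))) := by
  induction b with
  | zero =>
    have heq : ∀ N, ∑ n ∈ Finset.Ico 1 (N+1), tt (m+1) n * er 0 n
        = (1/((m:ℝ)+1)) * (1/((m:ℝ)+1) - AA (m+1) (N+1)) := by
      intro N
      rw [← sum_tt m N]
      exact Finset.sum_congr rfl fun k _ => by rw [er_zero, mul_one]
    simp only [heq]
    have h := (tendsto_const_nhds (x := 1/((m:ℝ)+1)) (f := atTop)).sub (tendsto_AA m)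
    rw [sub_zero] at h
    have h2 := h.const_mul (1/((m:ℝ)+1))
    convert h2 using 1
    rw [pow_two]
    field_simp
  | succ b ih =>
    simp only [sum_tt_er b m]
    have h := (ih.sub (tendsto_AA_er m (b+1))).const_mul (1/((m:ℝ)+1))
    rw [sub_zero] at h
    convert h using 1
    rw [show b+1+2 = (b+2)+1 from rfl, pow_succ]
    field_simp

lemma key_hasSum (m b : ℕ) :
    HasSum (fun n : ℕ => if 1 ≤ n then tt (m+1) n * er b n else 0)
      (1/((m:ℝ)+1)^(b+2)) := by
  rw [hasSum_iff_tendsto_nat_of_nonneg]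
  · have heq : ∀ N, ∑ n ∈ Finset.range N, (if 1 ≤ n then tt (m+1) n * er b n else 0)
        = ∑ n ∈ Finset.Ico 1 N, tt (m+1) n * er b n := by
      intro N
      rw [Finset.range_eq_Ico]
      cases N with
      | zero => simp
      | succ N =>
        rw [Finset.sum_eq_sum_Ico_succ_bot (Nat.succ_pos N)]
        simp only [if_neg (by norm_num : ¬ (1:ℕ) ≤ 0), zero_add]
        exact Finset.sum_congr rfl fun k hk => if_pos (Finset.mem_Ico.mp hk).1
    simp only [heq]
    exact (tendsto_add_atTop_iff_nat 1).mp (tendsto_s m b)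
  · intro n
    split
    · exact mul_nonneg (tt_nonneg _ _) (er_nonneg _ _)
    · exact le_rfl

noncomputable def Ee (b n : ℕ) : ℝ≥0∞ := ENNReal.ofReal (er b n)

def snocEquiv (r : ℕ) : ℕ × (Fin r → ℕ) ≃ (Fin (r+1) → ℕ) where
  toFun p := Fin.snoc p.2 p.1
  invFun f := (f (Fin.last r), fun i => f i.castSucc)
  left_inv p := by
    refine Prod.ext ?_ ?_
    · simp [Fin.snoc_last]
    · funext i; simp [Fin.snoc_castSucc]
  right_inv f := by
    exact Fin.snoc_init_self f

lemma strictMono_snoc_iff {r : ℕ} {g : Fin r → ℕ} {k : ℕ} :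
    StrictMono (Fin.snoc g k : Fin (r+1) → ℕ) ↔ StrictMono g ∧ ∀ i, g i < k := by
  constructor
  · intro h
    refine ⟨fun i j hij => ?_, fun i => ?_⟩
    · have := h (show (i.castSucc : Fin (r+1)) < j.castSucc from
        Fin.castSucc_lt_castSucc_iff.mpr hij)
      simpa [Fin.snoc_castSucc] using this
    · have := h (Fin.castSucc_lt_last i)
      simpa [Fin.snoc_castSucc, Fin.snoc_last] using this
  · rintro ⟨h1, h2⟩ i j hij
    induction j using Fin.lastCases with
    | last =>
      induction i using Fin.lastCases with
      | last => exact absurd hij (lt_irrefl _)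
      | cast i => simpa [Fin.snoc_castSucc, Fin.snoc_last] using h2 i
    | cast j =>
      induction i using Fin.lastCases with
      | last => exact absurd hij (Fin.castSucc_lt_last j).asymm
      | cast i =>
        have hij' : i < j := Fin.castSucc_lt_castSucc_iff.mp hij
        simpa [Fin.snoc_castSucc] using h1 hij'

lemma forall_snoc_iff {r : ℕ} {g : Fin r → ℕ} {k : ℕ} {P : ℕ → Prop} :
    (∀ i : Fin (r+1), P ((Fin.snoc g k : Fin (r+1) → ℕ) i)) ↔ (∀ i, P (g i)) ∧ P k := by
  rw [Fin.forall_fin_succ']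
  simp [Fin.snoc_castSucc, Fin.snoc_last]

attribute [local instance] Classical.propDecidable

lemma forall_snoc_lt {r : ℕ} {g : Fin r → ℕ} {k n : ℕ} :
    (∀ i : Fin (r+1), (Fin.snoc g k : Fin (r+1) → ℕ) i < n) ↔ (∀ i, g i < n) ∧ k < n := by
  rw [Fin.forall_fin_succ']
  simp [Fin.snoc_castSucc, Fin.snoc_last]

lemma chainSum (r : ℕ) (n : ℕ) :
    (∑' g : Fin r → ℕ, if StrictMono g ∧ (∀ i, 1 ≤ g i) ∧ (∀ i, g i < n)
        then (∏ i, ENNReal.ofReal (1/(g i : ℝ))) else 0) = Ee r n := by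
  induction r generalizing n with
  | zero =>
    haveI : Unique (Fin 0 → ℕ) := ⟨⟨fun i => i.elim0⟩, fun f => funext fun i => i.elim0⟩
    rw [tsum_eq_single (default : Fin 0 → ℕ) (fun b hb => absurd (Subsingleton.elim b _) hb)]
    rw [if_pos ⟨fun i => i.elim0, fun i => i.elim0, fun i => i.elim0⟩]
    simp [Ee, er_zero]
  | succ r ih =>
    rw [← (snocEquiv r).tsum_eq, ENNReal.tsum_prod']
    have inner : ∀ k : ℕ,
        (∑' g : Fin r → ℕ, if StrictMono (snocEquiv r (k, g)) ∧ (∀ i, 1 ≤ snocEquiv r (k, g) i)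
            ∧ (∀ i, snocEquiv r (k, g) i < n)
          then (∏ i, ENNReal.ofReal (1/((snocEquiv r (k, g)) i : ℝ))) else 0)
        = if 1 ≤ k ∧ k < n then ENNReal.ofReal (1/(k:ℝ)) * Ee r k else 0 := by
      intro k
      have hcond : ∀ g : Fin r → ℕ,
          (StrictMono (snocEquiv r (k, g)) ∧ (∀ i, 1 ≤ snocEquiv r (k, g) i)
            ∧ (∀ i, snocEquiv r (k, g) i < n))
          ↔ ((1 ≤ k ∧ k < n) ∧ (StrictMono g ∧ (∀ i, 1 ≤ g i) ∧ (∀ i, g i < k))) := by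
        intro g
        have he : ((snocEquiv r) (k, g) : Fin (r+1) → ℕ) = Fin.snoc g k := rfl
        rw [he, strictMono_snoc_iff, forall_snoc_iff, forall_snoc_lt]
        constructor
        · rintro ⟨⟨hsm, hlt⟩, ⟨hge, hk1⟩, ⟨_, hkn⟩⟩
          exact ⟨⟨hk1, hkn⟩, hsm, hge, hlt⟩
        · rintro ⟨⟨hk1, hkn⟩, hsm, hge, hlt⟩
          exact ⟨⟨hsm, hlt⟩, ⟨hge, hk1⟩, ⟨fun i => (hlt i).trans hkn, hkn⟩⟩
      have hprod : ∀ g : Fin r → ℕ,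
          (∏ i, ENNReal.ofReal (1/((snocEquiv r (k, g)) i : ℝ)))
          = (∏ i, ENNReal.ofReal (1/(g i : ℝ))) * ENNReal.ofReal (1/(k:ℝ)) := by
        intro g
        have he : ((snocEquiv r) (k, g) : Fin (r+1) → ℕ) = Fin.snoc g k := rfl
        rw [he, Fin.prod_univ_castSucc]
        simp [Fin.snoc_castSucc, Fin.snoc_last]
      by_cases hk : 1 ≤ k ∧ k < n
      · rw [if_pos hk]
        have : ∀ g : Fin r → ℕ,
            (if StrictMono (snocEquiv r (k, g)) ∧ (∀ i, 1 ≤ snocEquiv r (k, g) i)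
              ∧ (∀ i, snocEquiv r (k, g) i < n)
            then (∏ i, ENNReal.ofReal (1/((snocEquiv r (k, g)) i : ℝ))) else 0)
            = ENNReal.ofReal (1/(k:ℝ)) *
              (if StrictMono g ∧ (∀ i, 1 ≤ g i) ∧ (∀ i, g i < k)
                then (∏ i, ENNReal.ofReal (1/(g i : ℝ))) else 0) := by
          intro g
          simp only [hprod g]
          rw [if_congr (hcond g) rfl rfl, if_congr (and_iff_right hk) rfl rfl]
          split
          · ring
          · rw [mul_zero]
        rw [tsum_congr this, ENNReal.tsum_mul_left, ih k]
      · rw [if_neg hk]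
        refine (tsum_congr fun g => ?_).trans tsum_zero
        exact if_neg (fun h => hk ((hcond g).mp h).1)
    rw [tsum_congr inner]
    rw [tsum_eq_sum (s := Finset.Ico 1 n) (fun k hk => if_neg (by
      rw [Finset.mem_Ico] at hk; exact hk))]
    have : ∀ k ∈ Finset.Ico 1 n,
        (if 1 ≤ k ∧ k < n then ENNReal.ofReal (1/(k:ℝ)) * Ee r k else 0)
        = ENNReal.ofReal ((1/(k:ℝ)) * er r k) := by
      intro k hk
      rw [Finset.mem_Ico] at hk
      rw [if_pos hk, Ee, ← ENNReal.ofReal_mul (by positivity)]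
    rw [Finset.sum_congr rfl this, ← ENNReal.ofReal_sum_of_nonneg
      (fun i _ => mul_nonneg (by positivity) (er_nonneg _ _)), Ee, er_succ]

noncomputable def hE (a b : ℕ) : ℝ≥0∞ :=
  ∑' n : ℕ, if 1 ≤ n then ENNReal.ofReal (1/(n:ℝ)^(b+2)) * Ee a n else 0

lemma mzvE (a b : ℕ) :
    (∑' k : {f : Fin (a+1) → ℕ // StrictMono f ∧ ∀ i, 1 ≤ f i},
        ∏ i, ENNReal.ofReal (1 / ((k.1 i : ℝ) ^ (Fin.snoc (fun _ : Fin a => 1) (b+2) : Fin (a+1) → ℕ) i)))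
      = hE a b := by
  refine Eq.trans (tsum_subtype {f : Fin (a+1) → ℕ | StrictMono f ∧ ∀ i, 1 ≤ f i}
    (fun f => ∏ i, ENNReal.ofReal (1 / ((f i : ℝ) ^ (Fin.snoc (fun _ : Fin a => 1) (b+2) : Fin (a+1) → ℕ) i)))) ?_
  have hind : ∀ f : Fin (a+1) → ℕ,
      Set.indicator {f : Fin (a+1) → ℕ | StrictMono f ∧ ∀ i, 1 ≤ f i}
        (fun f => ∏ i, ENNReal.ofReal (1 / ((f i : ℝ) ^ (Fin.snoc (fun _ : Fin a => 1) (b+2) : Fin (a+1) → ℕ) i))) f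
      = if StrictMono f ∧ ∀ i, 1 ≤ f i
          then ∏ i, ENNReal.ofReal (1 / ((f i : ℝ) ^ (Fin.snoc (fun _ : Fin a => 1) (b+2) : Fin (a+1) → ℕ) i)) else 0 := by
    intro f
    rw [Set.indicator_apply]
    rfl
  rw [tsum_congr hind, ← (snocEquiv a).tsum_eq, ENNReal.tsum_prod']
  refine tsum_congr fun n => ?_
  have hcond : ∀ g : Fin a → ℕ,
      (StrictMono (snocEquiv a (n, g)) ∧ (∀ i, 1 ≤ snocEquiv a (n, g) i))
      ↔ (1 ≤ n ∧ (StrictMono g ∧ (∀ i, 1 ≤ g i) ∧ (∀ i, g i < n))) := by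
    intro g
    have he : ((snocEquiv a) (n, g) : Fin (a+1) → ℕ) = Fin.snoc g n := rfl
    rw [he, strictMono_snoc_iff, forall_snoc_iff]
    constructor
    · rintro ⟨⟨hsm, hlt⟩, hge, hn1⟩
      exact ⟨hn1, hsm, hge, hlt⟩
    · rintro ⟨hn1, hsm, hge, hlt⟩
      exact ⟨⟨hsm, hlt⟩, hge, hn1⟩
  have hprod : ∀ g : Fin a → ℕ,
      (∏ i, ENNReal.ofReal (1 / (((snocEquiv a (n, g)) i : ℝ) ^ (Fin.snoc (fun _ : Fin a => 1) (b+2) : Fin (a+1) → ℕ) i)))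
      = (∏ i, ENNReal.ofReal (1/(g i : ℝ))) * ENNReal.ofReal (1/(n:ℝ)^(b+2)) := by
    intro g
    have he : ((snocEquiv a) (n, g) : Fin (a+1) → ℕ) = Fin.snoc g n := rfl
    rw [he, Fin.prod_univ_castSucc]
    simp [Fin.snoc_castSucc, Fin.snoc_last]
  by_cases hn : 1 ≤ n
  · rw [if_pos hn]
    have : ∀ g : Fin a → ℕ,
        (if StrictMono (snocEquiv a (n, g)) ∧ (∀ i, 1 ≤ snocEquiv a (n, g) i)
          then ∏ i, ENNReal.ofReal (1 / (((snocEquiv a (n, g)) i : ℝ) ^ (Fin.snoc (fun _ : Fin a => 1) (b+2) : Fin (a+1) → ℕ) i)) else 0)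
        = ENNReal.ofReal (1/(n:ℝ)^(b+2)) *
          (if StrictMono g ∧ (∀ i, 1 ≤ g i) ∧ (∀ i, g i < n)
            then (∏ i, ENNReal.ofReal (1/(g i : ℝ))) else 0) := by
      intro g
      simp only [hprod g]
      rw [if_congr (hcond g) rfl rfl, if_congr (and_iff_right hn) rfl rfl]
      split
      · ring
      · rw [mul_zero]
    rw [tsum_congr this, ENNReal.tsum_mul_left, chainSum a n]
  · rw [if_neg hn]
    refine (tsum_congr fun g => ?_).trans tsum_zero
    exact if_neg (fun h => hn ((hcond g).mp h).1)

lemma heightOne_eq (a b : ℕ) : heightOne a b = (hE a b).toReal := by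
  rw [← mzvE a b]
  unfold heightOne mzv
  rw [ENNReal.tsum_toReal_eq (fun k => ?_)]
  · refine tsum_congr fun k => ?_
    rw [ENNReal.toReal_prod]
    refine Finset.prod_congr rfl fun i _ => ?_
    rw [ENNReal.toReal_ofReal (by positivity)]
  · exact (ENNReal.prod_lt_top (fun i _ => ENNReal.ofReal_lt_top)).ne

lemma keyE (b : ℕ) {n : ℕ} (hn : 1 ≤ n) :
    ENNReal.ofReal (1/(n:ℝ)^(b+2))
      = ∑' k : ℕ, if 1 ≤ k then ENNReal.ofReal (tt n k) * Ee b k else 0 := by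
  obtain ⟨m, rfl⟩ : ∃ m, n = m + 1 := ⟨n - 1, by omega⟩
  have h := key_hasSum m b
  have h2 : ENNReal.ofReal (∑' k : ℕ, (if 1 ≤ k then tt (m+1) k * er b k else 0))
      = ∑' k : ℕ, ENNReal.ofReal (if 1 ≤ k then tt (m+1) k * er b k else 0) :=
    ENNReal.ofReal_tsum_of_nonneg
      (fun k => by split
                   · exact mul_nonneg (tt_nonneg _ _) (er_nonneg _ _)
                   · exact le_rfl)
      h.summable
  rw [h.tsum_eq] at h2
  rw [show ((m+1 : ℕ) : ℝ) = (m : ℝ) + 1 by push_cast; ring, h2]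
  refine tsum_congr fun k => ?_
  split
  · rw [ENNReal.ofReal_mul (tt_nonneg _ _), Ee]
  · rw [ENNReal.ofReal_zero]

lemma hE_symm (a b : ℕ) : hE a b = hE b a := by
  have main : ∀ a b : ℕ, hE a b
      = ∑' n : ℕ, ∑' k : ℕ, (if 1 ≤ n ∧ 1 ≤ k
          then ENNReal.ofReal (tt n k) * (Ee a n * Ee b k) else 0) := by
    intro a b
    unfold hE
    refine tsum_congr fun n => ?_
    by_cases hn : 1 ≤ n
    · rw [if_pos hn, keyE b hn, ← ENNReal.tsum_mul_right]
      refine tsum_congr fun k => ?_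
      rw [ite_mul, zero_mul, if_congr (Iff.symm (and_iff_right hn)) rfl rfl]
      split
      · ring
      · rfl
    · rw [if_neg hn]
      refine Eq.symm ((tsum_congr fun k => ?_).trans tsum_zero)
      exact if_neg (fun h => hn h.1)
  rw [main a b, main b a, ENNReal.tsum_comm]
  refine tsum_congr fun k => tsum_congr fun n => ?_
  rw [if_congr and_comm rfl rfl]
  split
  · rw [tt_symm]; ring
  · rfl

lemma heightOne_symm (a b : ℕ) : heightOne a b = heightOne b a := by
  rw [heightOne_eq, heightOne_eq, hE_symm]

end MZVAux

theorem Zminus_odd_vanishes (m : ℕ) :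
    ∑ a ∈ Finset.range (2 * m + 2), (-1 : ℝ) ^ (2 * m + 1 - a) * heightOne a (2 * m + 1 - a) =
      0 := by

  set S := ∑ a ∈ Finset.range (2 * m + 2), (-1 : ℝ) ^ (2 * m + 1 - a) * heightOne a (2 * m + 1 - a) with hS
  have hrefl := Finset.sum_range_reflect
    (fun a => (-1 : ℝ) ^ (2 * m + 1 - a) * heightOne a (2 * m + 1 - a)) (2 * m + 2)
  have h1 : S = ∑ a ∈ Finset.range (2 * m + 2), (-1 : ℝ) ^ a * heightOne a (2 * m + 1 - a) := by
    rw [hS, ← hrefl]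
    refine Finset.sum_congr rfl fun a ha => ?_
    rw [Finset.mem_range] at ha
    have e1 : 2 * m + 2 - 1 - a = 2 * m + 1 - a := by omega
    have e2 : 2 * m + 1 - (2 * m + 1 - a) = a := by omega
    rw [e1, e2, heightOne_symm]
  have h2 : S = -S := by
    nth_rewrite 1 [hS]
    rw [h1, ← Finset.sum_neg_distrib]
    refine Finset.sum_congr rfl fun a ha => ?_
    rw [Finset.mem_range] at ha
    have hsign : (-1 : ℝ) ^ (2 * m + 1 - a) = -(-1 : ℝ) ^ a := by
      have : (2 * m + 1 - a) + a = 2 * m + 1 := by omega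
      have h3 : (-1 : ℝ) ^ ((2 * m + 1 - a) + a) = -1 := by
        rw [this]; simp [pow_succ, pow_mul]
      rw [pow_add] at h3
      have h4 : ((-1 : ℝ) ^ a) * ((-1 : ℝ) ^ a) = 1 := by
        simp [← pow_add, ← two_mul, pow_mul]
      calc (-1 : ℝ) ^ (2 * m + 1 - a) = (-1 : ℝ) ^ (2 * m + 1 - a) * (((-1:ℝ)^a) * ((-1:ℝ)^a)) := by rw [h4, mul_one]
        _ = ((-1 : ℝ) ^ (2 * m + 1 - a) * ((-1:ℝ)^a)) * ((-1:ℝ)^a) := by ring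
        _ = -(-1:ℝ)^a := by rw [h3]; ring
    rw [hsign]
    ring
  linarith
end

section
/- For any nonnegative integer m, ζ⋆({1}^m, 2) = (m+1)·ζ(m+2). -/
open Filter

namespace HOS




/-- `hh m n = ∑_{1 ≤ k₁ ≤ ⋯ ≤ k_m ≤ n} 1/(k₁⋯k_m)`. -/
noncomputable def hh : ℕ → ℕ → ℝ
  | 0, _ => 1
  | m+1, n => ∑ k ∈ Finset.Icc 1 n, hh m k / k

lemma hh_zero (n : ℕ) : hh 0 n = 1 := rfl

lemma hh_succ (m n : ℕ) : hh (m+1) n = ∑ k ∈ Finset.Icc 1 n, hh m k / k := rfl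

lemma hh_nonneg (m n : ℕ) : 0 ≤ hh m n := by
  induction m generalizing n with
  | zero => exact zero_le_one
  | succ m ih =>
    rw [hh_succ]
    exact Finset.sum_nonneg fun k _ => div_nonneg (ih k) (Nat.cast_nonneg k)

lemma hh_one (m : ℕ) : hh m 1 = 1 := by
  induction m with
  | zero => rfl
  | succ m ih => rw [hh_succ]; simp [ih]

lemma hh_succ_top (m n : ℕ) :
    hh (m+1) (n+1) = hh (m+1) n + hh m (n+1) / (n+1) := by
  rw [hh_succ, hh_succ, Finset.sum_Icc_succ_top (Nat.one_le_iff_ne_zero.mpr (Nat.succ_ne_zero n))]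
  push_cast
  ring

/-- Monotone extension by `snoc`. -/
lemma monotone_snoc {m : ℕ} {g : Fin m → ℕ} {k : ℕ} (hg : Monotone g)
    (hk : ∀ i, g i ≤ k) : Monotone (Fin.snoc g k) := by
  intro i j hij
  induction j using Fin.lastCases with
  | last =>
    rw [Fin.snoc_last]
    induction i using Fin.lastCases with
    | last => rw [Fin.snoc_last]
    | cast i' => rw [Fin.snoc_castSucc]; exact hk i'
  | cast j' =>
    have hi : i ≠ Fin.last m := by
      intro h
      subst h
      exact absurd (lt_of_le_of_lt hij (Fin.castSucc_lt_last j')) (lt_irrefl _)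
    obtain ⟨i', rfl⟩ := Fin.exists_castSucc_eq.mpr hi
    rw [Fin.snoc_castSucc, Fin.snoc_castSucc]
    exact hg (Fin.castSucc_le_castSucc_iff.mp hij)

/-- Peel off the last (largest) entry of a weakly increasing chain. -/
noncomputable def peel (m : ℕ) (Q : ℕ → Prop) (Qdc : ∀ x y, x ≤ y → Q y → Q x) :
    {f : Fin (m+1) → ℕ // Monotone f ∧ ∀ i, 1 ≤ f i ∧ Q (f i)} ≃
    (Σ k : {k : ℕ // 1 ≤ k ∧ Q k},
      {g : Fin m → ℕ // Monotone g ∧ ∀ i, 1 ≤ g i ∧ g i ≤ k.1}) where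
  toFun f := ⟨⟨f.1 (Fin.last m), (f.2.2 _).1, (f.2.2 _).2⟩,
    ⟨Fin.init f.1,
      fun i j hij => f.2.1 (Fin.castSucc_le_castSucc_iff.mpr hij),
      fun i => ⟨(f.2.2 _).1, f.2.1 (Fin.le_last _)⟩⟩⟩
  invFun x := ⟨Fin.snoc x.2.1 x.1.1,
    monotone_snoc x.2.2.1 (fun i => (x.2.2.2 i).2),
    fun i => by
      induction i using Fin.lastCases with
      | last => rw [Fin.snoc_last]; exact ⟨x.1.2.1, x.1.2.2⟩
      | cast i' =>
        rw [Fin.snoc_castSucc]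
        exact ⟨(x.2.2.2 i').1, Qdc _ _ ((x.2.2.2 i').2) x.1.2.2⟩⟩
  left_inv f := Subtype.ext (Fin.snoc_init_self f.1)
  right_inv := by
    have hinj : Function.Injective
        (fun (x : Σ k : {k : ℕ // 1 ≤ k ∧ Q k},
            {g : Fin m → ℕ // Monotone g ∧ ∀ i, 1 ≤ g i ∧ g i ≤ k.1}) =>
          (⟨Fin.snoc x.2.1 x.1.1,
            monotone_snoc x.2.2.1 (fun i => (x.2.2.2 i).2),
            fun i => by
              induction i using Fin.lastCases with
              | last => rw [Fin.snoc_last]; exact ⟨x.1.2.1, x.1.2.2⟩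
              | cast i' =>
                rw [Fin.snoc_castSucc]
                exact ⟨(x.2.2.2 i').1, Qdc _ _ ((x.2.2.2 i').2) x.1.2.2⟩⟩ :
            {f : Fin (m+1) → ℕ // Monotone f ∧ ∀ i, 1 ≤ f i ∧ Q (f i)})) := by
      rintro ⟨⟨k, hk⟩, ⟨g, hg⟩⟩ ⟨⟨k', hk'⟩, ⟨g', hg'⟩⟩ h
      have hval : (Fin.snoc g k : Fin (m+1) → ℕ) = Fin.snoc g' k' :=
        congrArg Subtype.val h
      have hkk : k = k' := by
        have := congrFun hval (Fin.last m)
        simpa using this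
      subst hkk
      have hgg : g = g' := by
        funext i
        have := congrFun hval (Fin.castSucc i)
        simpa using this
      subst hgg
      rfl
    intro x
    apply hinj
    refine Subtype.ext ?_
    dsimp only
    exact Fin.snoc_init_self _



noncomputable def Ae (m b : ℕ) : ENNReal :=
  ∑' g : {g : Fin m → ℕ // Monotone g ∧ ∀ i, 1 ≤ g i ∧ g i ≤ b},
    ∏ i, ENNReal.ofReal (1 / (g.1 i : ℝ))

lemma Ae_eq (m : ℕ) : ∀ b : ℕ, Ae m b = ENNReal.ofReal (hh m b) := by
  induction m with
  | zero =>
    intro b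
    have hu : Unique {g : Fin 0 → ℕ // Monotone g ∧ ∀ i, 1 ≤ g i ∧ g i ≤ b} :=
      ⟨⟨⟨fun i => i.elim0, fun i => i.elim0, fun i => i.elim0⟩⟩,
        fun x => Subtype.ext (funext fun i => i.elim0)⟩
    unfold Ae
    rw [tsum_eq_single hu.default (fun b' hb' => absurd (hu.uniq b') hb')]
    simp [hh_zero]
  | succ m ih =>
    intro b
    unfold Ae
    rw [← Equiv.tsum_eq (peel m (fun x => x ≤ b) (fun x y hxy hy => le_trans hxy hy)).symm]
    rw [ENNReal.tsum_sigma']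
    have hinner : ∀ (k : {k : ℕ // 1 ≤ k ∧ k ≤ b})
        (g : {g : Fin m → ℕ // Monotone g ∧ ∀ i, 1 ≤ g i ∧ g i ≤ k.1}),
        (∏ i, ENNReal.ofReal
          (1 / ((((peel m (fun x => x ≤ b) (fun x y hxy hy => le_trans hxy hy)).symm
            ⟨k, g⟩).1 : Fin (m+1) → ℕ) i : ℝ))) =
        (∏ i, ENNReal.ofReal (1 / (g.1 i : ℝ))) * ENNReal.ofReal (1 / (k.1 : ℝ)) := by
      intro k g
      have hcoe : (((peel m (fun x => x ≤ b) (fun x y hxy hy => le_trans hxy hy)).symm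
          ⟨k, g⟩).1 : Fin (m+1) → ℕ) = Fin.snoc g.1 k.1 := rfl
      rw [hcoe, Fin.prod_univ_castSucc]
      simp only [Fin.snoc_castSucc, Fin.snoc_last]
    calc ∑' (k : {k : ℕ // 1 ≤ k ∧ k ≤ b})
          (g : {g : Fin m → ℕ // Monotone g ∧ ∀ i, 1 ≤ g i ∧ g i ≤ k.1}),
          ∏ i, ENNReal.ofReal
            (1 / ((((peel m (fun x => x ≤ b) (fun x y hxy hy => le_trans hxy hy)).symm
              ⟨k, g⟩).1 : Fin (m+1) → ℕ) i : ℝ))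
        = ∑' (k : {k : ℕ // 1 ≤ k ∧ k ≤ b}),
            ENNReal.ofReal (hh m k.1) * ENNReal.ofReal (1 / (k.1 : ℝ)) := by
          apply tsum_congr
          intro k
          rw [tsum_congr (hinner k), ENNReal.tsum_mul_right]
          rw [show (∑' (g : {g : Fin m → ℕ // Monotone g ∧ ∀ i, 1 ≤ g i ∧ g i ≤ k.1}),
            ∏ i, ENNReal.ofReal (1 / (g.1 i : ℝ))) = Ae m k.1 from rfl, ih k.1]
      _ = ∑ k ∈ Finset.Icc 1 b, (ENNReal.ofReal (hh m k) * ENNReal.ofReal (1 / (k : ℝ))) := by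
          rw [← Finset.tsum_subtype (Finset.Icc 1 b)
            (fun k => ENNReal.ofReal (hh m k) * ENNReal.ofReal (1 / (k : ℝ)))]
          rw [← Equiv.tsum_eq
            (⟨fun k => ⟨k.1, Finset.mem_Icc.mpr k.2⟩, fun k => ⟨k.1, Finset.mem_Icc.mp k.2⟩,
              fun k => rfl, fun k => rfl⟩ :
              {k : ℕ // 1 ≤ k ∧ k ≤ b} ≃ {k : ℕ // k ∈ Finset.Icc 1 b})
            (fun k => ENNReal.ofReal (hh m (k : ℕ)) * ENNReal.ofReal (1 / ((k : ℕ) : ℝ)))]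
          exact tsum_congr fun k => rfl
      _ = ENNReal.ofReal (hh (m+1) b) := by
          rw [hh_succ, ENNReal.ofReal_sum_of_nonneg
            (fun k _ => div_nonneg (hh_nonneg m k) (Nat.cast_nonneg k))]
          apply Finset.sum_congr rfl
          intro k hk
          rw [← ENNReal.ofReal_mul (hh_nonneg m k)]
          congr 1
          rw [mul_one_div]

/-- Peel off the last entry of an unbounded weakly increasing chain. -/
noncomputable def peelTop (m : ℕ) :
    {f : Fin (m+1) → ℕ // Monotone f ∧ ∀ i, 1 ≤ f i} ≃
    (Σ k : {k : ℕ // 1 ≤ k},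
      {g : Fin m → ℕ // Monotone g ∧ ∀ i, 1 ≤ g i ∧ g i ≤ k.1}) where
  toFun f := ⟨⟨f.1 (Fin.last m), f.2.2 _⟩,
    ⟨Fin.init f.1,
      fun i j hij => f.2.1 (Fin.castSucc_le_castSucc_iff.mpr hij),
      fun i => ⟨f.2.2 _, f.2.1 (Fin.le_last _)⟩⟩⟩
  invFun x := ⟨Fin.snoc x.2.1 x.1.1,
    monotone_snoc x.2.2.1 (fun i => (x.2.2.2 i).2),
    fun i => by
      induction i using Fin.lastCases with
      | last => rw [Fin.snoc_last]; exact x.1.2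
      | cast i' =>
        rw [Fin.snoc_castSucc]
        exact (x.2.2.2 i').1⟩
  left_inv f := Subtype.ext (Fin.snoc_init_self f.1)
  right_inv := by
    have hinj : Function.Injective
        (fun (x : Σ k : {k : ℕ // 1 ≤ k},
            {g : Fin m → ℕ // Monotone g ∧ ∀ i, 1 ≤ g i ∧ g i ≤ k.1}) =>
          (⟨Fin.snoc x.2.1 x.1.1,
            monotone_snoc x.2.2.1 (fun i => (x.2.2.2 i).2),
            fun i => by
              induction i using Fin.lastCases with
              | last => rw [Fin.snoc_last]; exact x.1.2
              | cast i' =>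
                rw [Fin.snoc_castSucc]
                exact (x.2.2.2 i').1⟩ :
            {f : Fin (m+1) → ℕ // Monotone f ∧ ∀ i, 1 ≤ f i})) := by
      rintro ⟨⟨k, hk⟩, ⟨g, hg⟩⟩ ⟨⟨k', hk'⟩, ⟨g', hg'⟩⟩ h
      have hval : (Fin.snoc g k : Fin (m+1) → ℕ) = Fin.snoc g' k' :=
        congrArg Subtype.val h
      have hkk : k = k' := by
        have := congrFun hval (Fin.last m)
        simpa using this
      subst hkk
      have hgg : g = g' := by
        funext i
        have := congrFun hval (Fin.castSucc i)
        simpa using this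
      subst hgg
      rfl
    intro x
    apply hinj
    refine Subtype.ext ?_
    dsimp only
    exact Fin.snoc_init_self _

lemma star_eq (m : ℕ) :
    (∑' x : {f : Fin (m+1) → ℕ // Monotone f ∧ ∀ i, 1 ≤ f i},
      ∏ i, ENNReal.ofReal
        (1 / ((x.1 i : ℝ) ^ ((Fin.snoc (fun _ : Fin m => 1) 2 : Fin (m+1) → ℕ) i)))) =
    ∑' n : ℕ, ENNReal.ofReal (hh m (n+1) / ((n+1 : ℕ) : ℝ)^2) := by
  rw [← Equiv.tsum_eq (peelTop m).symm]
  rw [ENNReal.tsum_sigma']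
  have hinner : ∀ (k : {k : ℕ // 1 ≤ k})
      (g : {g : Fin m → ℕ // Monotone g ∧ ∀ i, 1 ≤ g i ∧ g i ≤ k.1}),
      (∏ i, ENNReal.ofReal
        (1 / (((((peelTop m).symm ⟨k, g⟩).1 : Fin (m+1) → ℕ) i : ℝ) ^
            ((Fin.snoc (fun _ : Fin m => 1) 2 : Fin (m+1) → ℕ) i)))) =
      (∏ i, ENNReal.ofReal (1 / (g.1 i : ℝ))) * ENNReal.ofReal (1 / (k.1 : ℝ)^2) := by
    intro k g
    have hcoe : ((((peelTop m).symm ⟨k, g⟩).1 : Fin (m+1) → ℕ)) = Fin.snoc g.1 k.1 := rfl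
    rw [hcoe, Fin.prod_univ_castSucc]
    simp only [Fin.snoc_castSucc, Fin.snoc_last, pow_one]
  calc ∑' (k : {k : ℕ // 1 ≤ k})
        (g : {g : Fin m → ℕ // Monotone g ∧ ∀ i, 1 ≤ g i ∧ g i ≤ k.1}),
        ∏ i, ENNReal.ofReal
          (1 / (((((peelTop m).symm ⟨k, g⟩).1 : Fin (m+1) → ℕ) i : ℝ) ^
              ((Fin.snoc (fun _ : Fin m => 1) 2 : Fin (m+1) → ℕ) i)))
      = ∑' (k : {k : ℕ // 1 ≤ k}), ENNReal.ofReal (hh m k.1 / (k.1 : ℝ)^2) := by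
        apply tsum_congr
        intro k
        rw [tsum_congr (hinner k), ENNReal.tsum_mul_right]
        rw [show (∑' (g : {g : Fin m → ℕ // Monotone g ∧ ∀ i, 1 ≤ g i ∧ g i ≤ k.1}),
          ∏ i, ENNReal.ofReal (1 / (g.1 i : ℝ))) = Ae m k.1 from rfl, Ae_eq m k.1]
        rw [← ENNReal.ofReal_mul (hh_nonneg m k.1), mul_one_div]
    _ = ∑' n : ℕ, ENNReal.ofReal (hh m (n+1) / ((n+1 : ℕ) : ℝ)^2) := by
        refine (Equiv.tsum_eq ⟨fun n : ℕ => ⟨n+1, Nat.succ_le_succ (Nat.zero_le n)⟩,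
          fun k => k.1 - 1, fun n => by simp, fun k => Subtype.ext ?_⟩
          (fun k => ENNReal.ofReal (hh m k.1 / (k.1 : ℝ)^2))).symm
        exact Nat.succ_pred_eq_of_pos k.2

open Real MeasureTheory Set intervalIntegral in
lemma neg_log_pow_le (c : ℕ) {u : ℝ} (hu : 0 < u) (hu1 : u ≤ 1) :
    (-Real.log u)^c ≤ (2*c)^c * u ^ (-(1/2 : ℝ)) := by
  rcases Nat.eq_zero_or_pos c with rfl | hc
  · simp only [pow_zero, one_mul]
    rw [show (-(1/2 : ℝ)) = -(1/2 : ℝ) from rfl]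
    calc (1:ℝ) = 1 ^ (-(1/2:ℝ)) := by rw [Real.one_rpow]
    _ ≤ u ^ (-(1/2:ℝ)) := by
        apply Real.rpow_le_rpow_of_nonpos hu (by linarith) (by norm_num)
  · have hlog : -Real.log u ≤ (2*c : ℝ) * u ^ (-(1/(2*c) : ℝ)) := by
      have h1 : Real.log (u ^ (-(1/(2*c) : ℝ))) = -(1/(2*c) : ℝ) * Real.log u :=
        Real.log_rpow hu _
      have h2 : Real.log (u ^ (-(1/(2*c) : ℝ))) ≤ u ^ (-(1/(2*c) : ℝ)) := by
        have := Real.add_one_le_exp (Real.log (u ^ (-(1/(2*c) : ℝ))))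
        nlinarith [Real.exp_log (Real.rpow_pos_of_pos hu (-(1/(2*c) : ℝ))),
          Real.rpow_pos_of_pos hu (-(1/(2*c) : ℝ))]
      have hc0 : (0:ℝ) < 2*c := by positivity
      calc -Real.log u = (2*c : ℝ) * (-(1/(2*c) : ℝ) * Real.log u) := by
            field_simp
      _ = (2*c : ℝ) * Real.log (u ^ (-(1/(2*c) : ℝ))) := by rw [h1]
      _ ≤ (2*c : ℝ) * u ^ (-(1/(2*c) : ℝ)) := by
            apply mul_le_mul_of_nonneg_left h2 (by positivity)
    have hnn : 0 ≤ -Real.log u := neg_nonneg.mpr (Real.log_nonpos hu.le hu1)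
    calc (-Real.log u)^c ≤ ((2*c : ℝ) * u ^ (-(1/(2*c) : ℝ)))^c :=
          pow_le_pow_left₀ hnn hlog c
    _ = (2*c:ℝ)^c * (u ^ (-(1/(2*c) : ℝ)))^c := mul_pow _ _ c
    _ = (2*c:ℝ)^c * u ^ (-(1/2 : ℝ)) := by
          rw [← Real.rpow_natCast (u ^ (-(1/(2*c) : ℝ))) c, ← Real.rpow_mul hu.le]
          congr 2
          have : (c:ℝ) ≠ 0 := Nat.cast_ne_zero.mpr (Nat.pos_iff_ne_zero.mp hc)
          field_simp
    _ = (2*(c:ℝ))^c * u ^ (-(1/2 : ℝ)) := by norm_num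

open Real MeasureTheory Set intervalIntegral in
lemma integrableOn_master (a b c : ℕ) :
    IntegrableOn (fun u : ℝ => u^a * (1-u)^b * (-Real.log u)^c) (Set.Ioc (0:ℝ) 1) volume := by
  have hmeas : Measurable fun u : ℝ => u^a * (1-u)^b * (-Real.log u)^c := by
    apply Measurable.mul
    apply Measurable.mul
    · exact (measurable_id.pow_const a)
    · exact ((measurable_const.sub measurable_id).pow_const b)
    · exact ((Real.measurable_log.neg).pow_const c)
  have hg : IntegrableOn (fun u : ℝ => (2*c:ℝ)^c * u ^ (-(1/2 : ℝ))) (Set.Ioc (0:ℝ) 1) volume := by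
    have := (intervalIntegrable_rpow' (a := 0) (b := 1) (r := -(1/2:ℝ)) (by norm_num))
    rw [intervalIntegrable_iff_integrableOn_Ioc_of_le zero_le_one] at this
    exact this.const_mul _
  apply Integrable.mono' hg (hmeas.aestronglyMeasurable.restrict)
  filter_upwards [ae_restrict_mem measurableSet_Ioc] with u hu
  have h1 : 0 < u := hu.1
  have h2 : u ≤ 1 := hu.2
  have hnn : (0:ℝ) ≤ u^a * (1-u)^b * (-Real.log u)^c := by
    apply mul_nonneg (mul_nonneg (pow_nonneg h1.le a) (pow_nonneg (by linarith) b))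
    exact pow_nonneg (neg_nonneg.mpr (Real.log_nonpos h1.le h2)) c
  rw [Real.norm_eq_abs, abs_of_nonneg hnn]
  have h3 : u^a ≤ 1 := pow_le_one₀ h1.le h2
  have h4 : (1-u)^b ≤ 1 := pow_le_one₀ (by linarith) (by linarith)
  have h5 : (0:ℝ) ≤ (-Real.log u)^c :=
    pow_nonneg (neg_nonneg.mpr (Real.log_nonpos h1.le h2)) c
  have h6 : u^a*(1-u)^b ≤ 1 := by
    calc u^a*(1-u)^b ≤ 1*1 :=
          mul_le_mul h3 h4 (pow_nonneg (by linarith) b) zero_le_one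
    _ = 1 := mul_one 1
  calc u^a * (1-u)^b * (-Real.log u)^c ≤ 1 * (-Real.log u)^c :=
        mul_le_mul_of_nonneg_right h6 h5
  _ = (-Real.log u)^c := one_mul _
  _ ≤ (2*c:ℝ)^c * u ^ (-(1/2 : ℝ)) := neg_log_pow_le c h1 h2

open Real MeasureTheory Set intervalIntegral Filter in
lemma tendsto_pow_mul_neg_log_pow (a c : ℕ) :
    Tendsto (fun u : ℝ => u^(a+1) * (-Real.log u)^c)
      (nhdsWithin 0 (Set.Ioi 0)) (nhds 0) := by
  have hcomp : Tendsto (fun y : ℝ => (y^c * Real.exp (-y)) * (Real.exp (-y))^a)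
      atTop (nhds 0) := by
    have h1 := tendsto_pow_mul_exp_neg_atTop_nhds_zero c
    have h2 := (Real.tendsto_exp_neg_atTop_nhds_zero).pow (n := a)
    have := h1.mul h2
    simpa using this
  have hlog : Tendsto (fun u : ℝ => -Real.log u) (nhdsWithin 0 (Set.Ioi 0)) atTop :=
    tendsto_neg_atBot_atTop.comp Real.tendsto_log_nhdsGT_zero
  have := hcomp.comp hlog
  apply this.congr'
  filter_upwards [self_mem_nhdsWithin] with u hu
  have hu' : (0:ℝ) < u := hu
  simp only [Function.comp_apply, neg_neg, Real.exp_log hu']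
  ring

open Real MeasureTheory Set intervalIntegral Filter in
lemma contOn_master (a b c : ℕ) :
    ContinuousOn (fun u : ℝ => u^(a+1) * (1-u)^b * (-Real.log u)^c) (Set.Icc 0 1) := by
  intro x hx
  rcases eq_or_ne x 0 with rfl | hx0
  · rw [← continuousWithinAt_diff_self]
    have hsub : Set.Icc (0:ℝ) 1 \ {0} ⊆ Set.Ioi 0 := by
      rintro y ⟨⟨hy0, hy1⟩, hy⟩
      exact lt_of_le_of_ne hy0 (Ne.symm hy)
    have hlim : Tendsto (fun u : ℝ => u^(a+1) * (1-u)^b * (-Real.log u)^c)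
        (nhdsWithin 0 (Set.Ioi 0)) (nhds 0) := by
      have h1 := tendsto_pow_mul_neg_log_pow a c
      have h2 : Tendsto (fun u : ℝ => (1-u)^b) (nhdsWithin 0 (Set.Ioi 0)) (nhds 1) := by
        have : Tendsto (fun u : ℝ => (1-u)^b) (nhds 0) (nhds 1) := by
          have := (show Continuous fun u : ℝ => (1-u)^b by fun_prop).tendsto (0:ℝ)
          simpa using this
        exact this.mono_left nhdsWithin_le_nhds
      have := h1.mul h2
      rw [zero_mul] at this
      apply this.congr
      intro u
      ring
    have hT := hlim.mono_left (nhdsWithin_mono _ hsub)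
    unfold ContinuousWithinAt
    convert hT using 2
    simp [Real.log_zero, zero_pow (Nat.succ_ne_zero a)]
  · apply ContinuousAt.continuousWithinAt
    have hlog : ContinuousAt Real.log x := Real.continuousAt_log hx0
    exact ((continuousAt_pow x (a+1)).mul
      ((((continuous_const : Continuous fun _ : ℝ => (1:ℝ)).sub
        continuous_id).pow b).continuousAt)).mul
      ((hlog.neg).pow c)

open Real MeasureTheory Set intervalIntegral Filter in
lemma L1 (j p : ℕ) :
    ((j:ℝ)+1) * ∫ u in (0:ℝ)..1, u^j * (-Real.log u)^(p+1) =
    ((p:ℝ)+1) * ∫ u in (0:ℝ)..1, u^j * (-Real.log u)^p := by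
  have hcont : ContinuousOn (fun u : ℝ => u^(j+1) * (-Real.log u)^(p+1)) (Set.Icc 0 1) := by
    have := contOn_master j 0 (p+1)
    apply this.congr
    intro u _
    simp
  have hderiv : ∀ x ∈ Set.Ioo (0:ℝ) 1,
      HasDerivAt (fun u : ℝ => u^(j+1) * (-Real.log u)^(p+1))
        (((j:ℝ)+1) * (x^j * (-Real.log x)^(p+1)) - ((p:ℝ)+1) * (x^j * (-Real.log x)^p)) x := by
    intro x hx
    have hx0 : x ≠ 0 := ne_of_gt hx.1
    have h1 : HasDerivAt (fun u : ℝ => u^(j+1)) (((j:ℝ)+1) * x^j) x := by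
      have := hasDerivAt_pow (j+1) x
      simpa using this
    have h2 : HasDerivAt (fun u : ℝ => (-Real.log u)^(p+1))
        (-(((p:ℝ)+1) * (-Real.log x)^p / x)) x := by
      have hlog : HasDerivAt (fun u : ℝ => -Real.log u) (-(1/x)) x :=
        ((Real.hasDerivAt_log hx0).neg).congr_deriv (by ring)
      have hcomp := (hasDerivAt_pow (p+1) (-Real.log x)).comp x hlog
      simp only [Function.comp_def] at hcomp
      refine hcomp.congr_deriv ?_
      push_cast [Nat.add_sub_cancel]
      field_simp
    have := h1.mul h2
    refine this.congr_deriv ?_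
    rw [show x^(j+1) = x^j * x by ring]
    field_simp
    ring
  have hint : IntervalIntegrable
      (fun x : ℝ => ((j:ℝ)+1) * (x^j * (-Real.log x)^(p+1)) - ((p:ℝ)+1) * (x^j * (-Real.log x)^p))
      volume 0 1 := by
    have i1 : IntervalIntegrable (fun x : ℝ => x^j * (-Real.log x)^(p+1)) volume 0 1 := by
      rw [intervalIntegrable_iff_integrableOn_Ioc_of_le zero_le_one]
      have := integrableOn_master j 0 (p+1)
      apply this.congr_fun ?_ measurableSet_Ioc
      intro u _
      simp
    have i2 : IntervalIntegrable (fun x : ℝ => x^j * (-Real.log x)^p) volume 0 1 := by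
      rw [intervalIntegrable_iff_integrableOn_Ioc_of_le zero_le_one]
      have := integrableOn_master j 0 p
      apply this.congr_fun ?_ measurableSet_Ioc
      intro u _
      simp
    exact (i1.const_mul _).sub (i2.const_mul _)
  have hftc := intervalIntegral.integral_eq_sub_of_hasDerivAt_of_le zero_le_one hcont hderiv hint
  have hend : (fun u : ℝ => u^(j+1) * (-Real.log u)^(p+1)) 1 -
      (fun u : ℝ => u^(j+1) * (-Real.log u)^(p+1)) 0 = 0 := by
    simp [Real.log_zero, Real.log_one, zero_pow (Nat.succ_ne_zero j), zero_pow (Nat.succ_ne_zero p)]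
  rw [hend] at hftc
  have i1 : IntervalIntegrable (fun x : ℝ => x^j * (-Real.log x)^(p+1)) volume 0 1 := by
    rw [intervalIntegrable_iff_integrableOn_Ioc_of_le zero_le_one]
    have := integrableOn_master j 0 (p+1)
    apply this.congr_fun ?_ measurableSet_Ioc
    intro u _
    simp
  have i2 : IntervalIntegrable (fun x : ℝ => x^j * (-Real.log x)^p) volume 0 1 := by
    rw [intervalIntegrable_iff_integrableOn_Ioc_of_le zero_le_one]
    have := integrableOn_master j 0 p
    apply this.congr_fun ?_ measurableSet_Ioc
    intro u _
    simp
  rw [intervalIntegral.integral_sub (i1.const_mul _) (i2.const_mul _),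
    intervalIntegral.integral_const_mul, intervalIntegral.integral_const_mul] at hftc
  linarith [hftc]

open Real MeasureTheory Set intervalIntegral Filter in
lemma iiS1 (j p : ℕ) :
    IntervalIntegrable (fun u : ℝ => u^j * (-Real.log u)^p) volume 0 1 := by
  rw [intervalIntegrable_iff_integrableOn_Ioc_of_le zero_le_one]
  have := integrableOn_master j 0 p
  apply this.congr_fun ?_ measurableSet_Ioc
  intro u _
  simp

open Real MeasureTheory Set intervalIntegral Filter in
lemma iiS2 (n m : ℕ) :
    IntervalIntegrable (fun u : ℝ => (1-u)^n * (-Real.log u)^m) volume 0 1 := by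
  rw [intervalIntegrable_iff_integrableOn_Ioc_of_le zero_le_one]
  have := integrableOn_master 0 n m
  apply this.congr_fun ?_ measurableSet_Ioc
  intro u _
  simp

open Real MeasureTheory Set intervalIntegral Filter in
lemma Pint (j p : ℕ) :
    ∫ u in (0:ℝ)..1, u^j * (-Real.log u)^p = (p.factorial : ℝ)/((j:ℝ)+1)^(p+1) := by
  induction p with
  | zero =>
    simp only [pow_zero, mul_one, Nat.factorial_zero, Nat.cast_one, pow_one]
    rw [integral_pow]
    norm_num
  | succ p ih =>
    have h := L1 j p
    rw [ih] at h
    have hj : ((j:ℝ)+1) ≠ 0 := by positivity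
    have : ∫ u in (0:ℝ)..1, u^j * (-Real.log u)^(p+1) =
        ((p:ℝ)+1) * ((p.factorial : ℝ)/((j:ℝ)+1)^(p+1)) / ((j:ℝ)+1) := by
      field_simp at h ⊢
      linarith
    rw [this, Nat.factorial_succ]
    push_cast
    field_simp
    ring

open Real MeasureTheory Set intervalIntegral Filter in
lemma L3 (m p : ℕ) :
    ((p:ℝ)+2) * ∫ u in (0:ℝ)..1, (1-u)^(p+1) * (-Real.log u)^(m+1) =
    ((p:ℝ)+1) * (∫ u in (0:ℝ)..1, (1-u)^p * (-Real.log u)^(m+1))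
      + ((m:ℝ)+1) * ∫ u in (0:ℝ)..1, (1-u)^(p+1) * (-Real.log u)^m := by
  have hcont : ContinuousOn (fun u : ℝ => u * (1-u)^(p+1) * (-Real.log u)^(m+1))
      (Set.Icc 0 1) := by
    have := contOn_master 0 (p+1) (m+1)
    apply this.congr
    intro u _
    simp
  have hderiv : ∀ x ∈ Set.Ioo (0:ℝ) 1,
      HasDerivAt (fun u : ℝ => u * (1-u)^(p+1) * (-Real.log u)^(m+1))
        (((p:ℝ)+2) * ((1-x)^(p+1) * (-Real.log x)^(m+1))
          - ((p:ℝ)+1) * ((1-x)^p * (-Real.log x)^(m+1))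
          - ((m:ℝ)+1) * ((1-x)^(p+1) * (-Real.log x)^m)) x := by
    intro x hx
    have hx0 : x ≠ 0 := ne_of_gt hx.1
    have hsub : HasDerivAt (fun u : ℝ => 1 - u) (-1) x := by
      simpa using (hasDerivAt_id x).const_sub 1
    have hpow : HasDerivAt (fun u : ℝ => (1-u)^(p+1))
        (-(((p:ℝ)+1) * (1-x)^p)) x := by
      have hcomp := (hasDerivAt_pow (p+1) (1-x)).comp x hsub
      simp only [Function.comp_def] at hcomp
      refine hcomp.congr_deriv ?_
      push_cast [Nat.add_sub_cancel]
      ring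
    have h1 : HasDerivAt (fun u : ℝ => u * (1-u)^(p+1))
        ((1-x)^(p+1) - ((p:ℝ)+1) * x * (1-x)^p) x := by
      have := (hasDerivAt_id x).mul hpow
      refine this.congr_deriv ?_
      simp only [id_eq]
      ring
    have h2 : HasDerivAt (fun u : ℝ => (-Real.log u)^(m+1))
        (-(((m:ℝ)+1) * (-Real.log x)^m / x)) x := by
      have hlog : HasDerivAt (fun u : ℝ => -Real.log u) (-(1/x)) x :=
        ((Real.hasDerivAt_log hx0).neg).congr_deriv (by ring)
      have hcomp := (hasDerivAt_pow (m+1) (-Real.log x)).comp x hlog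
      simp only [Function.comp_def] at hcomp
      refine hcomp.congr_deriv ?_
      push_cast [Nat.add_sub_cancel]
      field_simp
    have := h1.mul h2
    refine this.congr_deriv ?_
    field_simp
    ring
  have hint : IntervalIntegrable (fun x : ℝ =>
      ((p:ℝ)+2) * ((1-x)^(p+1) * (-Real.log x)^(m+1))
        - ((p:ℝ)+1) * ((1-x)^p * (-Real.log x)^(m+1))
        - ((m:ℝ)+1) * ((1-x)^(p+1) * (-Real.log x)^m)) volume 0 1 :=
    (((iiS2 (p+1) (m+1)).const_mul _).sub ((iiS2 p (m+1)).const_mul _)).sub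
      ((iiS2 (p+1) m).const_mul _)
  have hftc := intervalIntegral.integral_eq_sub_of_hasDerivAt_of_le zero_le_one hcont hderiv hint
  have hend : (fun u : ℝ => u * (1-u)^(p+1) * (-Real.log u)^(m+1)) 1 -
      (fun u : ℝ => u * (1-u)^(p+1) * (-Real.log u)^(m+1)) 0 = 0 := by
    norm_num
  rw [hend] at hftc
  rw [intervalIntegral.integral_sub (((iiS2 (p+1) (m+1)).const_mul _).sub
      ((iiS2 p (m+1)).const_mul _)) ((iiS2 (p+1) m).const_mul _),
    intervalIntegral.integral_sub ((iiS2 (p+1) (m+1)).const_mul _)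
      ((iiS2 p (m+1)).const_mul _),
    intervalIntegral.integral_const_mul, intervalIntegral.integral_const_mul,
    intervalIntegral.integral_const_mul] at hftc
  linarith [hftc]

open Real MeasureTheory Set intervalIntegral Filter in
lemma K_eq (m : ℕ) : ∀ n : ℕ,
    ((n:ℝ)+1) * ∫ u in (0:ℝ)..1, (1-u)^n * (-Real.log u)^m =
      (m.factorial : ℝ) * hh m (n+1) := by
  induction m with
  | zero =>
    intro n
    have : ∫ u in (0:ℝ)..1, (1-u)^n * (-Real.log u)^0 = 1/((n:ℝ)+1) := by
      simp only [pow_zero, mul_one]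
      rw [show (fun u : ℝ => (1-u)^n) = (fun u : ℝ => ((fun v : ℝ => v^n) (1-u))) from rfl]
      rw [intervalIntegral.integral_comp_sub_left (fun v : ℝ => v^n) 1]
      norm_num [integral_pow]
    rw [this, hh_zero]
    have : ((n:ℝ)+1) ≠ 0 := by positivity
    field_simp
    simp
  | succ m ih =>
    intro n
    induction n with
    | zero =>
      have h0 : ∫ u in (0:ℝ)..1, (1-u)^0 * (-Real.log u)^(m+1) =
          ∫ u in (0:ℝ)..1, u^0 * (-Real.log u)^(m+1) := by
        apply intervalIntegral.integral_congr
        intro u _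
        simp
      rw [h0, Pint 0 (m+1), hh_one]
      norm_num
    | succ n ihn =>
      have hL3 := L3 m n
      have hK3 := ih (n+1)
      have hn2 : ((n:ℝ)+1+1) ≠ 0 := by positivity
      rw [hh_succ_top m (n+1)]
      have hZ : (∫ u in (0:ℝ)..1, (1-u)^(n+1) * (-Real.log u)^m) =
          (m.factorial : ℝ) * hh m (n+1+1) / ((n:ℝ)+1+1) := by
        rw [eq_div_iff hn2]
        push_cast at hK3 ⊢
        linarith
      push_cast [Nat.factorial_succ] at ihn ⊢
      push_cast at hL3 hZ
      linear_combination hL3 + ihn + ((m:ℝ)+1) * hZ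

open Real MeasureTheory Set intervalIntegral Filter in
lemma lint_S2 (n m : ℕ) :
    ∫⁻ u in Set.Ioo (0:ℝ) 1, ENNReal.ofReal ((1-u)^n * (-Real.log u)^m) =
    ENNReal.ofReal (∫ u in (0:ℝ)..1, (1-u)^n * (-Real.log u)^m) := by
  have hi : IntegrableOn (fun u : ℝ => (1-u)^n * (-Real.log u)^m) (Set.Ioo 0 1) volume :=
    (((intervalIntegrable_iff_integrableOn_Ioc_of_le zero_le_one).mp
      (iiS2 n m)).mono_set Set.Ioo_subset_Ioc_self)
  rw [intervalIntegral.integral_of_le zero_le_one, MeasureTheory.integral_Ioc_eq_integral_Ioo]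
  rw [MeasureTheory.ofReal_integral_eq_lintegral_ofReal hi]
  filter_upwards [ae_restrict_mem measurableSet_Ioo] with u hu
  exact mul_nonneg (pow_nonneg (by linarith [hu.2] : (0:ℝ) ≤ 1 - u) n)
    (pow_nonneg (neg_nonneg.mpr (Real.log_nonpos hu.1.le (by linarith [hu.2]))) m)

open Real MeasureTheory Set intervalIntegral Filter in
lemma lint_S1 (j p : ℕ) :
    ∫⁻ u in Set.Ioo (0:ℝ) 1, ENNReal.ofReal (u^j * (-Real.log u)^p) =
    ENNReal.ofReal (∫ u in (0:ℝ)..1, u^j * (-Real.log u)^p) := by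
  have hi : IntegrableOn (fun u : ℝ => u^j * (-Real.log u)^p) (Set.Ioo 0 1) volume :=
    (((intervalIntegrable_iff_integrableOn_Ioc_of_le zero_le_one).mp
      (iiS1 j p)).mono_set Set.Ioo_subset_Ioc_self)
  rw [intervalIntegral.integral_of_le zero_le_one, MeasureTheory.integral_Ioc_eq_integral_Ioo]
  rw [MeasureTheory.ofReal_integral_eq_lintegral_ofReal hi]
  filter_upwards [ae_restrict_mem measurableSet_Ioo] with u hu
  exact mul_nonneg (pow_nonneg hu.1.le j)
    (pow_nonneg (neg_nonneg.mpr (Real.log_nonpos hu.1.le (by linarith [hu.2]))) p)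

open Real MeasureTheory Set intervalIntegral Filter in
lemma swap_main (m : ℕ) :
    (∑' n : ℕ, ENNReal.ofReal (hh m (n+1) / ((n+1 : ℕ) : ℝ)^2)) =
    ∑' j : ℕ, ENNReal.ofReal (((m:ℝ)+1) / ((j+1 : ℕ) : ℝ)^(m+2)) := by
  have hmf : (0:ℝ) < (m.factorial : ℝ) := by positivity
  -- step 1: rewrite terms via K_eq
  have hterm : ∀ n : ℕ, hh m (n+1) / ((n+1 : ℕ) : ℝ)^2 =
      (1 / ((m.factorial : ℝ) * ((n:ℝ)+1))) * ∫ u in (0:ℝ)..1, (1-u)^n * (-Real.log u)^m := by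
    intro n
    have h := K_eq m n
    have hn : ((n:ℝ)+1) ≠ 0 := by positivity
    push_cast at h ⊢
    field_simp
    nlinarith [h]
  -- step 2: each term as a lintegral
  have hterm2 : ∀ n : ℕ, ENNReal.ofReal (hh m (n+1) / ((n+1 : ℕ) : ℝ)^2) =
      ∫⁻ u in Set.Ioo (0:ℝ) 1,
        ENNReal.ofReal (1 / ((m.factorial : ℝ) * ((n:ℝ)+1))) *
          ENNReal.ofReal ((1-u)^n * (-Real.log u)^m) := by
    intro n
    rw [MeasureTheory.lintegral_const_mul' _ _ ENNReal.ofReal_ne_top, lint_S2]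
    rw [hterm n, ENNReal.ofReal_mul (by positivity)]
  rw [tsum_congr hterm2]
  -- step 3: swap sum and integral
  have hmeas : ∀ n : ℕ, AEMeasurable (fun u : ℝ =>
      ENNReal.ofReal (1 / ((m.factorial : ℝ) * ((n:ℝ)+1))) *
        ENNReal.ofReal ((1-u)^n * (-Real.log u)^m))
      (volume.restrict (Set.Ioo (0:ℝ) 1)) := by
    intro n
    apply AEMeasurable.const_mul
    apply Measurable.aemeasurable
    apply ENNReal.measurable_ofReal.comp
    exact ((measurable_const.sub measurable_id).pow_const n).mul
      ((Real.measurable_log.neg).pow_const m)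
  rw [← MeasureTheory.lintegral_tsum hmeas]
  -- step 4: pointwise evaluation of the series
  have hpt : ∀ u : ℝ, u ∈ Set.Ioo (0:ℝ) 1 →
      (∑' n : ℕ, ENNReal.ofReal (1 / ((m.factorial : ℝ) * ((n:ℝ)+1))) *
        ENNReal.ofReal ((1-u)^n * (-Real.log u)^m)) =
      ENNReal.ofReal ((-Real.log u)^(m+1) / ((m.factorial : ℝ) * (1-u))) := by
    intro u hu
    have hx0 : (0:ℝ) < 1 - u := by linarith [hu.2]
    have hx1 : 1 - u < 1 := by linarith [hu.1]
    have hxne : (1-u) ≠ 0 := ne_of_gt hx0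
    have hlogpos : 0 ≤ -Real.log u := neg_nonneg.mpr (Real.log_nonpos hu.1.le (by linarith))
    -- real series
    have hs : HasSum (fun n : ℕ => (1-u)^(n+1) / ((n:ℝ)+1)) (-Real.log (1 - (1-u))) :=
      Real.hasSum_pow_div_log_of_abs_lt_one (by rw [abs_of_pos hx0]; exact hx1)
    have hs2 : HasSum (fun n : ℕ => (1-u)^n / ((n:ℝ)+1)) ((-Real.log u) / (1-u)) := by
      have h' := hs.div_const (1-u)
      have hfe : (fun n : ℕ => (1-u)^(n+1) / ((n:ℝ)+1) / (1-u)) =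
          (fun n : ℕ => (1-u)^n / ((n:ℝ)+1)) := by
        funext n
        rw [pow_succ]
        field_simp
        try ring
      rw [hfe] at h'
      simpa using h'
    have hs3 : HasSum
        (fun n : ℕ => (1 / ((m.factorial : ℝ) * ((n:ℝ)+1))) * ((1-u)^n * (-Real.log u)^m))
        ((-Real.log u)^(m+1) / ((m.factorial : ℝ) * (1-u))) := by
      have h' := hs2.mul_left ((-Real.log u)^m / (m.factorial : ℝ))
      have hfe : (fun n : ℕ => ((-Real.log u)^m / (m.factorial : ℝ)) * ((1-u)^n / ((n:ℝ)+1))) =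
          (fun n : ℕ => (1 / ((m.factorial : ℝ) * ((n:ℝ)+1))) * ((1-u)^n * (-Real.log u)^m)) := by
        funext n
        have hn : ((n:ℝ)+1) ≠ 0 := by positivity
        field_simp
      rw [hfe] at h'
      have : ((-Real.log u)^m / (m.factorial : ℝ)) * ((-Real.log u) / (1-u)) =
          (-Real.log u)^(m+1) / ((m.factorial : ℝ) * (1-u)) := by
        rw [pow_succ]
        field_simp
        try ring
      rwa [this] at h'
    -- move to ENNReal
    calc (∑' n : ℕ, ENNReal.ofReal (1 / ((m.factorial : ℝ) * ((n:ℝ)+1))) *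
          ENNReal.ofReal ((1-u)^n * (-Real.log u)^m))
        = ∑' n : ℕ, ENNReal.ofReal
            ((1 / ((m.factorial : ℝ) * ((n:ℝ)+1))) * ((1-u)^n * (-Real.log u)^m)) := by
          apply tsum_congr
          intro n
          exact (ENNReal.ofReal_mul (by positivity)).symm
      _ = ENNReal.ofReal ((-Real.log u)^(m+1) / ((m.factorial : ℝ) * (1-u))) := by
          rw [← ENNReal.ofReal_tsum_of_nonneg ?_ hs3.summable, hs3.tsum_eq]
          intro n
          have : (0:ℝ) ≤ (1-u)^n * (-Real.log u)^m :=
            mul_nonneg (pow_nonneg hx0.le n) (pow_nonneg hlogpos m)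
          positivity
  rw [MeasureTheory.setLIntegral_congr_fun measurableSet_Ioo
    hpt]
  -- step 5: expand 1/(1-u) as geometric series
  have hpt2 : ∀ u : ℝ, u ∈ Set.Ioo (0:ℝ) 1 →
      ENNReal.ofReal ((-Real.log u)^(m+1) / ((m.factorial : ℝ) * (1-u))) =
      ∑' j : ℕ, ENNReal.ofReal (1 / (m.factorial : ℝ)) *
        ENNReal.ofReal (u^j * (-Real.log u)^(m+1)) := by
    intro u hu
    have hx0 : (0:ℝ) < 1 - u := by linarith [hu.2]
    have hlogpos : 0 ≤ -Real.log u := neg_nonneg.mpr (Real.log_nonpos hu.1.le (by linarith [hu.2]))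
    have hgeo : HasSum (fun j : ℕ => u^j) ((1-u)⁻¹) :=
      hasSum_geometric_of_lt_one hu.1.le hu.2
    have hs4 : HasSum (fun j : ℕ => (1 / (m.factorial : ℝ)) * (u^j * (-Real.log u)^(m+1)))
        ((-Real.log u)^(m+1) / ((m.factorial : ℝ) * (1-u))) := by
      have h' := hgeo.mul_left ((-Real.log u)^(m+1) / (m.factorial : ℝ))
      have hfe : (fun j : ℕ => ((-Real.log u)^(m+1) / (m.factorial : ℝ)) * u^j) =
          (fun j : ℕ => (1 / (m.factorial : ℝ)) * (u^j * (-Real.log u)^(m+1))) := by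
        funext j
        field_simp
      rw [hfe] at h'
      have : ((-Real.log u)^(m+1) / (m.factorial : ℝ)) * (1-u)⁻¹ =
          (-Real.log u)^(m+1) / ((m.factorial : ℝ) * (1-u)) := by
        field_simp
      rwa [this] at h'
    calc ENNReal.ofReal ((-Real.log u)^(m+1) / ((m.factorial : ℝ) * (1-u)))
        = ∑' j : ℕ, ENNReal.ofReal
            ((1 / (m.factorial : ℝ)) * (u^j * (-Real.log u)^(m+1))) := by
          rw [← ENNReal.ofReal_tsum_of_nonneg ?_ hs4.summable, hs4.tsum_eq]
          intro j
          have : (0:ℝ) ≤ u^j * (-Real.log u)^(m+1) :=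
            mul_nonneg (pow_nonneg hu.1.le j) (pow_nonneg hlogpos (m+1))
          positivity
      _ = ∑' j : ℕ, ENNReal.ofReal (1 / (m.factorial : ℝ)) *
            ENNReal.ofReal (u^j * (-Real.log u)^(m+1)) := by
          apply tsum_congr
          intro j
          exact ENNReal.ofReal_mul (by positivity)
  rw [MeasureTheory.setLIntegral_congr_fun measurableSet_Ioo
    hpt2]
  -- step 6: swap back
  have hmeas2 : ∀ j : ℕ, AEMeasurable (fun u : ℝ =>
      ENNReal.ofReal (1 / (m.factorial : ℝ)) *
        ENNReal.ofReal (u^j * (-Real.log u)^(m+1)))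
      (volume.restrict (Set.Ioo (0:ℝ) 1)) := by
    intro j
    apply AEMeasurable.const_mul
    apply Measurable.aemeasurable
    apply ENNReal.measurable_ofReal.comp
    exact (measurable_id.pow_const j).mul ((Real.measurable_log.neg).pow_const (m+1))
  rw [MeasureTheory.lintegral_tsum hmeas2]
  -- step 7: evaluate
  apply tsum_congr
  intro j
  rw [MeasureTheory.lintegral_const_mul' _ _ ENNReal.ofReal_ne_top, lint_S1, Pint j (m+1)]
  rw [← ENNReal.ofReal_mul (by positivity)]
  congr 1
  rw [Nat.factorial_succ]
  have h1 : ((j:ℝ)+1) ≠ 0 := by positivity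
  push_cast
  field_simp
  try ring

lemma tsum_ofReal_eq {ι : Type*} {f : ι → ℝ} (hf : ∀ i, 0 ≤ f i) {C : ℝ} (hC : 0 ≤ C)
    (h : ∑' i, ENNReal.ofReal (f i) = ENNReal.ofReal C) : ∑' i, f i = C := by
  set g : ι → NNReal := fun i => ⟨f i, hf i⟩ with hg
  have hco : ∀ i, ENNReal.ofReal (f i) = ((g i : NNReal) : ENNReal) := fun i =>
    ENNReal.ofReal_eq_coe_nnreal (hf i)
  rw [tsum_congr hco] at h
  have hne : (∑' i, ((g i : NNReal) : ENNReal)) ≠ ⊤ := by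
    rw [h]; exact ENNReal.ofReal_ne_top
  have hsum : Summable g := ENNReal.tsum_coe_ne_top_iff_summable.mp hne
  have h2 : ((∑' i, g i : NNReal) : ENNReal) = ((C.toNNReal : NNReal) : ENNReal) := by
    rw [ENNReal.coe_tsum hsum, h]
    rfl
  have h3 : (∑' i, g i : NNReal) = C.toNNReal := ENNReal.coe_inj.mp h2
  have h4 : ∑' i, f i = ((∑' i, g i : NNReal) : ℝ) := by
    rw [NNReal.coe_tsum]
    exact tsum_congr fun i => rfl
  rw [h4, h3, Real.coe_toNNReal _ hC]

end HOS

open HOS in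
lemma zetaV_eq (s : ℕ) (hs : 2 ≤ s) :
    zetaV s = ∑' j : ℕ, 1 / ((j+1 : ℕ) : ℝ)^s := by
  have hsum : Summable (fun n : ℕ => 1/(n:ℝ)^s) :=
    Real.summable_one_div_nat_pow.mpr (lt_of_lt_of_le one_lt_two hs)
  have hshift : Summable (fun j : ℕ => 1/((j+1 : ℕ):ℝ)^s) :=
    (summable_nat_add_iff 1).mpr hsum
  unfold zetaV plim
  apply Filter.Tendsto.limUnder_eq
  have hT := hshift.hasSum.tendsto_sum_nat
  apply hT.congr
  intro N
  rw [Finset.sum_Ico_eq_sum_range]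
  simp only [Nat.add_sub_cancel]
  apply Finset.sum_congr rfl
  intro k _
  rw [add_comm 1 k]

set_option maxHeartbeats 2000000 in
open HOS in
theorem height_one_star_ones_two (m : ℕ) :
    heightOneStar m 0 = ((m : ℝ) + 1) * zetaV (m + 2) := by
  have hsum : Summable (fun n : ℕ => 1/(n:ℝ)^(m+2)) :=
    Real.summable_one_div_nat_pow.mpr (by omega)
  have hshift : Summable (fun j : ℕ => 1/((j+1 : ℕ):ℝ)^(m+2)) :=
    (summable_nat_add_iff 1).mpr hsum
  have hZnn : (0:ℝ) ≤ ∑' j : ℕ, 1 / ((j+1 : ℕ) : ℝ)^(m+2) :=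
    tsum_nonneg fun j => by positivity
  have hzv : zetaV (m+2) = ∑' j : ℕ, 1 / ((j+1 : ℕ) : ℝ)^(m+2) := zetaV_eq _ (by omega)
  show mzvStar (Fin.snoc (fun _ : Fin m => 1) (0+2)) = _
  have h02 : (0 + 2 : ℕ) = 2 := rfl
  rw [h02]
  unfold mzvStar
  have hf : ∀ x : {f : Fin (m+1) → ℕ // Monotone f ∧ ∀ i, 1 ≤ f i},
      (0:ℝ) ≤ ∏ i, 1 / ((x.1 i : ℝ) ^ ((Fin.snoc (fun _ : Fin m => 1) 2 : Fin (m+1) → ℕ) i)) :=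
    fun x => Finset.prod_nonneg fun i _ =>
      div_nonneg zero_le_one (pow_nonneg (Nat.cast_nonneg _) _)
  have hdiv : (∑' j : ℕ, ((m:ℝ)+1)/((j+1 : ℕ):ℝ)^(m+2)) =
      ((m:ℝ)+1) * ∑' j : ℕ, 1/((j+1 : ℕ):ℝ)^(m+2) := by
    rw [← tsum_mul_left]
    exact tsum_congr fun j => (mul_one_div _ _).symm
  have hsumdiv : Summable (fun j : ℕ => ((m:ℝ)+1)/((j+1 : ℕ):ℝ)^(m+2)) :=
    (hshift.mul_left ((m:ℝ)+1)).congr fun j => (mul_one_div _ _)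

  have key : (∑' x : {f : Fin (m+1) → ℕ // Monotone f ∧ ∀ i, 1 ≤ f i},
      ENNReal.ofReal (∏ i, 1 /
        ((x.1 i : ℝ) ^ ((Fin.snoc (fun _ : Fin m => 1) 2 : Fin (m+1) → ℕ) i)))) =
      ENNReal.ofReal (((m:ℝ)+1) * ∑' j : ℕ, 1 / ((j+1 : ℕ) : ℝ)^(m+2)) := by
    calc (∑' x : {f : Fin (m+1) → ℕ // Monotone f ∧ ∀ i, 1 ≤ f i},
        ENNReal.ofReal (∏ i, 1 /
          ((x.1 i : ℝ) ^ ((Fin.snoc (fun _ : Fin m => 1) 2 : Fin (m+1) → ℕ) i))))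
        = ∑' x : {f : Fin (m+1) → ℕ // Monotone f ∧ ∀ i, 1 ≤ f i},
            ∏ i, ENNReal.ofReal (1 /
              ((x.1 i : ℝ) ^ ((Fin.snoc (fun _ : Fin m => 1) 2 : Fin (m+1) → ℕ) i))) := by
          apply tsum_congr
          intro x
          exact ENNReal.ofReal_prod_of_nonneg fun i _ =>
            div_nonneg zero_le_one (pow_nonneg (Nat.cast_nonneg _) _)
      _ = ∑' n : ℕ, ENNReal.ofReal (hh m (n+1) / ((n+1 : ℕ) : ℝ)^2) := star_eq m
      _ = ∑' j : ℕ, ENNReal.ofReal (((m:ℝ)+1) / ((j+1 : ℕ) : ℝ)^(m+2)) := swap_main m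
      _ = ENNReal.ofReal (∑' j : ℕ, ((m:ℝ)+1) / ((j+1 : ℕ) : ℝ)^(m+2)) :=
          (ENNReal.ofReal_tsum_of_nonneg (fun j => by positivity) hsumdiv).symm
      _ = ENNReal.ofReal (((m:ℝ)+1) * ∑' j : ℕ, 1 / ((j+1 : ℕ) : ℝ)^(m+2)) := by rw [hdiv]
  have := tsum_ofReal_eq hf (by positivity) key
  rw [this, hzv]
end

section
/- For any nonnegative integer n, ∑_{a₁+a₂=n+1} ζ(ā₁+1, ā₂+1) = ζ̄(1)·ζ(n+2) − ζ(1̄, n+2), where the sum is over pairs of nonnegative integers (a₁, a₂) with a₁+a₂ = n+1. -/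
open Filter

open Finset



/- ### Alternating series bounds -/

lemma alt_sum_bound_aux (f : ℕ → ℝ) (hf : Antitone f) (h0 : ∀ k, 0 ≤ f k) :
    ∀ m a b : ℕ, b ≤ a + m →
      0 ≤ (-1:ℝ)^a * ∑ k ∈ Ico a b, (-1:ℝ)^k * f k ∧
      (-1:ℝ)^a * ∑ k ∈ Ico a b, (-1:ℝ)^k * f k ≤ f a := by
  intro m
  induction m with
  | zero =>
    intro a b hb
    rw [Finset.Ico_eq_empty (by omega)]
    simp [h0 a]
  | succ m ih =>
    intro a b hb
    by_cases hab : b ≤ a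
    · rw [Finset.Ico_eq_empty (by omega)]
      simp [h0 a]
    · have hab' : a < b := by omega
      rw [Finset.sum_eq_sum_Ico_succ_bot hab']
      obtain ⟨ih1, ih2⟩ := ih (a+1) b (by omega)
      have sq : (-1:ℝ)^a * (-1:ℝ)^a = 1 := by
        rw [← pow_add]
        exact Even.neg_one_pow ⟨a, rfl⟩
      have e : (-1:ℝ)^a * ((-1:ℝ)^a * f a + ∑ k ∈ Ico (a+1) b, (-1:ℝ)^k * f k)
          = f a - (-1:ℝ)^(a+1) * ∑ k ∈ Ico (a+1) b, (-1:ℝ)^k * f k := by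
        rw [mul_add, ← mul_assoc, sq, pow_succ]
        ring
      rw [e]
      have := hf (Nat.le_succ a)
      constructor <;> linarith

lemma abs_alt_sum (f : ℕ → ℝ) (hf : Antitone f) (h0 : ∀ k, 0 ≤ f k) (a b : ℕ) :
    |∑ k ∈ Ico a b, (-1:ℝ)^k * f k| ≤ f a := by
  obtain ⟨h1, h2⟩ := alt_sum_bound_aux f hf h0 b a b (by omega)
  rcases Nat.even_or_odd a with he | ho
  · rw [he.neg_one_pow] at h1 h2
    rw [abs_le]; constructor <;> linarith [h0 a]
  · rw [ho.neg_one_pow] at h1 h2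
    rw [abs_le]; constructor <;> linarith [h0 a]

/- ### partial sums -/

noncomputable def altS (a N : ℕ) : ℝ := ∑ k ∈ Finset.Ico 1 (N+1), (-1:ℝ)^k / (k:ℝ)^a

lemma altS_def (a N : ℕ) : altS a N = ∑ k ∈ Finset.Ico 1 (N+1), (-1:ℝ)^k / (k:ℝ)^a := rfl

noncomputable def altf (a k : ℕ) : ℝ := 1 / ((max 1 k : ℕ):ℝ)^a

lemma altf_antitone (a : ℕ) : Antitone (altf a) := by
  intro i j hij
  unfold altf
  apply one_div_le_one_div_of_le
  · positivity
  · apply pow_le_pow_left₀ (by positivity)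
    exact_mod_cast Nat.cast_le.mpr (max_le_max le_rfl hij)

lemma altf_nonneg (a k : ℕ) : 0 ≤ altf a k := by unfold altf; positivity

lemma alt_seg_bound (a c d : ℕ) (hc : 1 ≤ c) :
    |∑ k ∈ Ico c d, (-1:ℝ)^k / (k:ℝ)^a| ≤ 1 / (c:ℝ)^a := by
  have h : ∑ k ∈ Ico c d, (-1:ℝ)^k / (k:ℝ)^a = ∑ k ∈ Ico c d, (-1:ℝ)^k * altf a k := by
    apply Finset.sum_congr rfl
    intro k hk
    rw [mem_Ico] at hk
    rw [altf, max_eq_right (by omega : 1 ≤ k)]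
    push_cast
    ring
  rw [h]
  have := abs_alt_sum (altf a) (altf_antitone a) (altf_nonneg a) c d
  rw [altf, max_eq_right hc] at this
  exact this

lemma altS_sub (a n m : ℕ) (h : n ≤ m) :
    altS a m - altS a n = ∑ k ∈ Ico (n+1) (m+1), (-1:ℝ)^k / (k:ℝ)^a := by
  rw [altS, altS, ← Finset.sum_Ico_consecutive _ (by omega : 1 ≤ n+1) (by omega : n+1 ≤ m+1)]
  ring

lemma altS_cauchy (a : ℕ) (ha : 1 ≤ a) : CauchySeq (altS a) := by
  refine cauchySeq_of_le_tendsto_0 (fun N => 1 / ((N:ℝ)+1)) ?_ ?_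
  · intro n m N hn hm
    wlog hnm : n ≤ m generalizing n m
    · rw [dist_comm]; exact this m n hm hn (by omega)
    rw [Real.dist_eq, abs_sub_comm, altS_sub a n m hnm]
    calc |∑ k ∈ Ico (n+1) (m+1), (-1:ℝ)^k / (k:ℝ)^a| ≤ 1 / ((n:ℝ)+1)^a := by
          have := alt_seg_bound a (n+1) (m+1) (by omega)
          push_cast at this; exact this
      _ ≤ 1 / ((n:ℝ)+1) := by
          apply one_div_le_one_div_of_le (by positivity)
          calc ((n:ℝ)+1) = ((n:ℝ)+1)^1 := (pow_one _).symm
            _ ≤ ((n:ℝ)+1)^a := pow_le_pow_right₀ (by linarith [Nat.cast_nonneg (α := ℝ) n]) ha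
      _ ≤ 1 / ((N:ℝ)+1) := by
          apply one_div_le_one_div_of_le (by positivity)
          have : (N:ℝ) ≤ n := Nat.cast_le.mpr hn
          linarith
  · have : Tendsto (fun N : ℕ => ((N:ℝ)+1)) atTop atTop :=
      tendsto_atTop_add_const_right _ 1 tendsto_natCast_atTop_atTop
    simpa using (show Tendsto (fun N : ℕ => ((N:ℝ)+1)⁻¹) atTop (nhds 0) from this.inv_tendsto_atTop)

noncomputable def altL (a : ℕ) : ℝ := limUnder atTop (altS a)

lemma altS_tendsto (a : ℕ) (ha : 1 ≤ a) : Tendsto (altS a) atTop (nhds (altL a)) := by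
  obtain ⟨l, hl⟩ := cauchySeq_tendsto_of_complete (altS_cauchy a ha)
  rwa [altL, hl.limUnder_eq]

lemma altS_rem (a N : ℕ) (ha : 1 ≤ a) : |altS a N - altL a| ≤ 1 / ((N:ℝ)+1)^a := by
  have h1 : Tendsto (fun M => |altS a M - altS a N|) atTop (nhds |altL a - altS a N|) :=
    (((altS_tendsto a ha).sub_const _).abs)
  rw [abs_sub_comm]
  apply le_of_tendsto h1
  filter_upwards [eventually_ge_atTop N] with M hM
  rw [altS_sub a N M hM]
  have := alt_seg_bound a (N+1) (M+1) (by omega)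
  push_cast at this; exact this

lemma altS_abs_le_one (a N : ℕ) : |altS a N| ≤ 1 := by
  have h : altS a N = ∑ k ∈ Ico 1 (N+1), (-1:ℝ)^k * altf a k := by
    apply Finset.sum_congr rfl
    intro k hk
    rw [mem_Ico] at hk
    rw [altf, max_eq_right (by omega : 1 ≤ k)]
    push_cast; ring
  rw [h]
  have := abs_alt_sum (altf a) (altf_antitone a) (altf_nonneg a) 1 (N+1)
  simpa [altf] using this



/- ### sum of 1/k^2 bounded -/

lemma sq_sum_le' : ∀ N : ℕ, 1 ≤ N → ∑ k ∈ Ico 1 (N+1), 1/(k:ℝ)^2 ≤ 2 - 1/(N:ℝ) := by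
  intro N
  induction N with
  | zero => omega
  | succ N ih =>
    intro _
    rw [Finset.sum_Ico_succ_top (by omega)]
    by_cases hN : 1 ≤ N
    · have h1 := ih hN
      have hN' : (1:ℝ) ≤ (N:ℝ) := by exact_mod_cast hN
      have key : 1/((N:ℝ)+1)^2 ≤ 1/(N:ℝ) - 1/((N:ℝ)+1) := by
        rw [div_sub_div _ _ (by positivity) (by positivity)]
        rw [div_le_div_iff₀ (by positivity) (by positivity)]
        ring_nf
        nlinarith
      push_cast
      linarith
    · interval_cases N
      norm_num

lemma sq_sum_le (N : ℕ) : ∑ k ∈ Ico 1 (N+1), 1/(k:ℝ)^2 ≤ 2 := by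
  by_cases hN : 1 ≤ N
  · have := sq_sum_le' N hN
    have : (0:ℝ) < N := by exact_mod_cast hN
    have h2 := sq_sum_le' N hN
    have h3 : 0 < 1/(N:ℝ) := by positivity
    linarith
  · interval_cases N; simp

lemma pow_s_le_sq (s k : ℕ) (hs : 2 ≤ s) (hk : 1 ≤ k) : 1/(k:ℝ)^s ≤ 1/(k:ℝ)^2 := by
  have hk' : (1:ℝ) ≤ (k:ℝ) := by exact_mod_cast hk
  apply one_div_le_one_div_of_le (by positivity)
  exact pow_le_pow_right₀ hk' hs

/- ### zetaV partial sums -/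

noncomputable def Ppart (s N : ℕ) : ℝ := ∑ k ∈ Finset.Ico 1 (N+1), 1/(k:ℝ)^s

lemma Ppart_mono (s : ℕ) : Monotone (Ppart s) := by
  intro n m h
  apply Finset.sum_le_sum_of_subset_of_nonneg
  · apply Finset.Ico_subset_Ico le_rfl; omega
  · intro k _ _; positivity

lemma Ppart_le_two (s N : ℕ) (hs : 2 ≤ s) : Ppart s N ≤ 2 := by
  refine le_trans (Finset.sum_le_sum ?_) (sq_sum_le N)
  intro k hk
  rw [mem_Ico] at hk
  exact pow_s_le_sq s k hs (by omega)

noncomputable def PL (s : ℕ) : ℝ := ⨆ N, Ppart s N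

lemma Ppart_tendsto (s : ℕ) (hs : 2 ≤ s) : Tendsto (Ppart s) atTop (nhds (PL s)) := by
  apply tendsto_atTop_ciSup (Ppart_mono s)
  rw [bddAbove_def]
  exact ⟨2, by rintro x ⟨N, rfl⟩; exact Ppart_le_two s N hs⟩

/- ### convergence from |c k| ≤ 1/k² -/

lemma conv_of_abs_le (c : ℕ → ℝ) (h : ∀ k, 1 ≤ k → |c k| ≤ 1/(k:ℝ)^2) :
    ∃ l, Tendsto (fun N => ∑ k ∈ Ico 1 (N+1), c k) atTop (nhds l) := by
  set u : ℕ → ℝ := fun N => ∑ k ∈ Ico 1 (N+1), (c k + 1/(k:ℝ)^2) with hu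
  have hterm : ∀ k ∈ Ico 1 (1+1000000), True := fun _ _ => trivial
  have humono : Monotone u := by
    intro n m hnm
    apply Finset.sum_le_sum_of_subset_of_nonneg
    · apply Finset.Ico_subset_Ico le_rfl; omega
    · intro k hk _
      rw [mem_Ico] at hk
      have := h k (by omega)
      have := abs_le.mp this
      linarith [this.1]
  have hubdd : ∀ N, u N ≤ 4 := by
    intro N
    have : u N ≤ ∑ k ∈ Ico 1 (N+1), 2 * (1/(k:ℝ)^2) := by
      apply Finset.sum_le_sum
      intro k hk
      rw [mem_Ico] at hk
      have := abs_le.mp (h k (by omega))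
      linarith [this.2]
    rw [← Finset.mul_sum] at this
    linarith [sq_sum_le N]
  have hut : Tendsto u atTop (nhds (⨆ N, u N)) := by
    apply tendsto_atTop_ciSup humono
    rw [bddAbove_def]
    exact ⟨4, by rintro x ⟨N, rfl⟩; exact hubdd N⟩
  refine ⟨(⨆ N, u N) - PL 2, ?_⟩
  have : (fun N => ∑ k ∈ Ico 1 (N+1), c k) = fun N => u N - Ppart 2 N := by
    funext N
    rw [hu, Ppart, ← Finset.sum_sub_distrib]
    simp
  rw [this]
  exact hut.sub (Ppart_tendsto 2 le_rfl)

/- ### zeta2barI 1 s converges -/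

lemma inner_zbI (s k₂ : ℕ) (hk : 1 ≤ k₂) :
    ∑ k₁ ∈ Ico 1 k₂, (-1:ℝ)^k₁ / ((k₁:ℝ)^1 * (k₂:ℝ)^s)
      = (1/(k₂:ℝ)^s) * altS 1 (k₂ - 1) := by
  rw [altS_def, Nat.sub_add_cancel hk, Finset.mul_sum]
  apply Finset.sum_congr rfl
  intro k hk'
  rw [mem_Ico] at hk'
  have h1 : (0:ℝ) < (k:ℝ) := by exact_mod_cast hk'.1
  field_simp



/- convergence of zeta2barI 1 s partial sums, s ≥ 2 -/
lemma zbI_conv (s : ℕ) (hs : 2 ≤ s) :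
    ∃ l, Tendsto (fun N : ℕ => ∑ k₂ ∈ Ico 1 (N+1), ∑ k₁ ∈ Ico 1 k₂,
      (-1:ℝ)^k₁ / ((k₁:ℝ)^1 * (k₂:ℝ)^s)) atTop (nhds l) := by
  apply conv_of_abs_le
  intro k hk
  rw [inner_zbI s k hk]
  have h1 : |(1/(k:ℝ)^s) * altS 1 (k-1)| ≤ (1/(k:ℝ)^s) * 1 := by
    rw [abs_mul]
    apply mul_le_mul _ (altS_abs_le_one 1 (k-1)) (abs_nonneg _) (by positivity)
    rw [abs_of_nonneg (by positivity)]
  calc |(1/(k:ℝ)^s) * altS 1 (k-1)| ≤ (1/(k:ℝ)^s) * 1 := h1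
    _ = 1/(k:ℝ)^s := mul_one _
    _ ≤ 1/(k:ℝ)^2 := pow_s_le_sq s k hs hk

/- inner sum for zeta2barB -/
lemma inner_zbB (a b k₂ : ℕ) (hk : 1 ≤ k₂) :
    ∑ k₁ ∈ Ico 1 k₂, (-1:ℝ)^(k₁+k₂) / ((k₁:ℝ)^a * (k₂:ℝ)^b)
      = ((-1:ℝ)^k₂/(k₂:ℝ)^b) * altS a (k₂ - 1) := by
  rw [altS_def, Nat.sub_add_cancel hk, Finset.mul_sum]
  apply Finset.sum_congr rfl
  intro k hk'
  rw [mem_Ico] at hk'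
  have h1 : (0:ℝ) < (k:ℝ) := by exact_mod_cast hk'.1
  rw [pow_add]
  field_simp

/- convergence of zeta2barB a b partial sums, a,b ≥ 1 -/
lemma zbB_conv (a b : ℕ) (ha : 1 ≤ a) (hb : 1 ≤ b) :
    ∃ l, Tendsto (fun N : ℕ => ∑ k₂ ∈ Ico 1 (N+1), ∑ k₁ ∈ Ico 1 k₂,
      (-1:ℝ)^(k₁+k₂) / ((k₁:ℝ)^a * (k₂:ℝ)^b)) atTop (nhds l) := by
  set e : ℕ → ℝ := fun k => ((-1:ℝ)^k/(k:ℝ)^b) * (altS a (k-1) - altL a) with he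
  obtain ⟨l₂, hl₂⟩ : ∃ l, Tendsto (fun N => ∑ k ∈ Ico 1 (N+1), e k) atTop (nhds l) := by
    apply conv_of_abs_le
    intro k hk
    rw [he]
    have hk' : (1:ℝ) ≤ (k:ℝ) := by exact_mod_cast hk
    have hrem : |altS a (k-1) - altL a| ≤ 1/(k:ℝ)^a := by
      have := altS_rem a (k-1) ha
      have hc : ((k-1:ℕ):ℝ) + 1 = (k:ℝ) := by
        have : (1:ℕ) ≤ k := hk
        push_cast [Nat.cast_sub this]
        ring
      rwa [hc] at this
    have : |((-1:ℝ)^k/(k:ℝ)^b) * (altS a (k-1) - altL a)| ≤ (1/(k:ℝ)^b) * (1/(k:ℝ)^a) := by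
      rw [abs_mul, abs_div, abs_pow, abs_neg, abs_one, one_pow, abs_of_nonneg (by positivity : (0:ℝ) ≤ (k:ℝ)^b)]
      exact mul_le_mul le_rfl hrem (abs_nonneg _) (by positivity)
    refine le_trans this ?_
    rw [div_mul_div_comm, one_mul, ← pow_add]
    exact pow_s_le_sq (b+a) k (by omega) hk
  refine ⟨altL a * altL b + l₂, ?_⟩
  have key : ∀ N : ℕ, (∑ k₂ ∈ Ico 1 (N+1), ∑ k₁ ∈ Ico 1 k₂,
      (-1:ℝ)^(k₁+k₂) / ((k₁:ℝ)^a * (k₂:ℝ)^b))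
      = altL a * altS b N + ∑ k ∈ Ico 1 (N+1), e k := by
    intro N
    rw [altS_def, Finset.mul_sum, ← Finset.sum_add_distrib]
    refine Finset.sum_congr rfl fun k hk => ?_
    rw [mem_Ico] at hk
    rw [inner_zbB a b k hk.1, he]
    ring
  simp only [key]
  exact (((altS_tendsto b hb).const_mul (altL a)).add hl₂)



/- sign parity lemma -/
lemma sign_eq (k₁ k₂ : ℕ) (h : k₁ ≤ k₂) : (-1:ℝ)^(k₁+k₂) = (-1:ℝ)^(k₂-k₁) := by
  have h1 : k₁ + k₂ = (k₂ - k₁) + 2*k₁ := by omega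
  rw [h1, pow_add, pow_mul]
  simp

/- telescoping / geometric sum -/
lemma geo_sum (n : ℕ) (x y : ℝ) (hx : 0 < x) (hxy : x < y) :
    ∑ a ∈ range (n+2), 1/(x^(a+1) * y^(n+1-a+1))
      = 1/(x^(n+2)*(y-x)) - 1/(y^(n+2)*(y-x)) := by
  have hy : 0 < y := hx.trans hxy
  have hne : y - x ≠ 0 := sub_ne_zero_of_ne hxy.ne'
  set v : ℕ → ℝ := fun a => 1/(x^a * y^(n+2-a)) with hv
  have step : ∀ a b : ℕ, 1/(x^(a+1)*y^(b+1)) = (1/(x^(a+1)*y^b) - 1/(x^a*y^(b+1)))/(y-x) := by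
    intro a b
    rw [eq_div_iff hne]
    field_simp
    ring
  have key : ∀ a ∈ range (n+2), 1/(x^(a+1) * y^(n+1-a+1)) = (v (a+1) - v a)/(y-x) := by
    intro a ha
    rw [mem_range] at ha
    have h1 : n+2-(a+1) = n+1-a := by omega
    have h2 : n+2-a = (n+1-a)+1 := by omega
    rw [hv]
    simp only [h1, h2]
    exact step a (n+1-a)
  rw [Finset.sum_congr rfl key, ← Finset.sum_div, Finset.sum_range_sub v]
  have hv2 : v (n+2) = 1/x^(n+2) := by rw [hv]; simp
  have hv0 : v 0 = 1/y^(n+2) := by rw [hv]; simp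
  rw [hv2, hv0]
  field_simp

/- part 2 = T partial sums -/
lemma part2_eq (s N : ℕ) :
    ∑ k₂ ∈ Ico 1 (N+1), ∑ k₁ ∈ Ico 1 k₂, (-1:ℝ)^(k₁+k₂)/((k₂:ℝ)^s*((k₂:ℝ)-(k₁:ℝ)))
      = ∑ k₂ ∈ Ico 1 (N+1), ∑ k₁ ∈ Ico 1 k₂, (-1:ℝ)^k₁/((k₁:ℝ)^1*(k₂:ℝ)^s) := by
  refine Finset.sum_congr rfl fun k₂ hk₂ => ?_
  rw [mem_Ico] at hk₂
  refine Finset.sum_nbij' (fun k₁ => k₂ - k₁) (fun d => k₂ - d) ?_ ?_ ?_ ?_ ?_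
  · intro a ha; simp only [mem_Ico] at ha ⊢; omega
  · intro a ha; simp only [mem_Ico] at ha ⊢; omega
  · intro a ha; simp only [mem_Ico] at ha; omega
  · intro a ha; simp only [mem_Ico] at ha; omega
  · intro k₁ hk₁
    rw [mem_Ico] at hk₁
    rw [sign_eq k₁ k₂ (by omega)]
    have hc : ((k₂ - k₁ : ℕ):ℝ) = (k₂:ℝ) - (k₁:ℝ) := by
      push_cast [Nat.cast_sub (by omega : k₁ ≤ k₂)]
      ring
    rw [hc, pow_one, mul_comm ((k₂:ℝ) - (k₁:ℝ)) ((k₂:ℝ)^s)]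

/- part 1 = A partial sums -/
lemma part1_eq (s N : ℕ) :
    ∑ k₂ ∈ Ico 1 (N+1), ∑ k₁ ∈ Ico 1 k₂, (-1:ℝ)^(k₁+k₂)/((k₁:ℝ)^s*((k₂:ℝ)-(k₁:ℝ)))
      = ∑ k ∈ Ico 1 (N+1), (1/(k:ℝ)^s) * altS 1 (N-k) := by
  rw [← Finset.sum_Ico_Ico_comm' 1 (N+1) (fun k₁ k₂ => (-1:ℝ)^(k₁+k₂)/((k₁:ℝ)^s*((k₂:ℝ)-(k₁:ℝ))))]
  refine Finset.sum_congr rfl fun k₁ hk₁ => ?_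
  rw [mem_Ico] at hk₁
  rw [altS_def, Finset.mul_sum]
  refine Finset.sum_nbij' (fun k₂ => k₂ - k₁) (fun d => k₁ + d) ?_ ?_ ?_ ?_ ?_
  · intro a ha; simp only [mem_Ico] at ha ⊢; omega
  · intro a ha; simp only [mem_Ico] at ha ⊢; omega
  · intro a ha; simp only [mem_Ico] at ha; omega
  · intro a ha; simp only [mem_Ico] at ha; omega
  · intro k₂ hk₂
    rw [mem_Ico] at hk₂
    rw [sign_eq k₁ k₂ (by omega)]
    have hc : ((k₂ - k₁ : ℕ):ℝ) = (k₂:ℝ) - (k₁:ℝ) := by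
      push_cast [Nat.cast_sub (by omega : k₁ ≤ k₂)]
      ring
    rw [hc, pow_one]
    field_simp



lemma finite_id (n N : ℕ) :
    ∑ a ∈ range (n+2), ∑ k₂ ∈ Ico 1 (N+1), ∑ k₁ ∈ Ico 1 k₂,
        (-1:ℝ)^(k₁+k₂) / ((k₁:ℝ)^(a+1) * (k₂:ℝ)^(n+1-a+1))
      = (∑ k ∈ Ico 1 (N+1), (1/(k:ℝ)^(n+2)) * altS 1 (N-k))
        - ∑ k₂ ∈ Ico 1 (N+1), ∑ k₁ ∈ Ico 1 k₂, (-1:ℝ)^k₁ / ((k₁:ℝ)^1 * (k₂:ℝ)^(n+2)) := by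
  rw [Finset.sum_comm]
  have inner : ∀ k₂ ∈ Ico 1 (N+1),
      (∑ a ∈ range (n+2), ∑ k₁ ∈ Ico 1 k₂,
        (-1:ℝ)^(k₁+k₂) / ((k₁:ℝ)^(a+1) * (k₂:ℝ)^(n+1-a+1)))
      = (∑ k₁ ∈ Ico 1 k₂, (-1:ℝ)^(k₁+k₂)/((k₁:ℝ)^(n+2)*((k₂:ℝ)-(k₁:ℝ))))
        - ∑ k₁ ∈ Ico 1 k₂, (-1:ℝ)^(k₁+k₂)/((k₂:ℝ)^(n+2)*((k₂:ℝ)-(k₁:ℝ))) := by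
    intro k₂ hk₂
    rw [Finset.sum_comm, ← Finset.sum_sub_distrib]
    refine Finset.sum_congr rfl fun k₁ hk₁ => ?_
    rw [mem_Ico] at hk₁
    have hx : (0:ℝ) < (k₁:ℝ) := by exact_mod_cast hk₁.1
    have hxy : (k₁:ℝ) < (k₂:ℝ) := by exact_mod_cast hk₁.2
    have e1 : ∀ a : ℕ, (-1:ℝ)^(k₁+k₂) / ((k₁:ℝ)^(a+1) * (k₂:ℝ)^(n+1-a+1))
        = (-1:ℝ)^(k₁+k₂) * (1/((k₁:ℝ)^(a+1) * (k₂:ℝ)^(n+1-a+1))) := by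
      intro a; rw [mul_one_div]
    simp only [e1, ← Finset.mul_sum]
    rw [geo_sum n (k₁:ℝ) (k₂:ℝ) hx hxy]
    rw [mul_sub, mul_one_div, mul_one_div]
  rw [Finset.sum_congr rfl inner, Finset.sum_sub_distrib, part1_eq (n+2) N, ← part2_eq (n+2) N]

lemma ptwise_bound (k d : ℕ) (hk : 1 ≤ k) (hd : 1 ≤ d) :
    1/((k:ℝ)^2 * d) ≤ 4/(((k:ℝ)+(d:ℝ))^2) + 2/((((k:ℝ)+(d:ℝ))) * (k:ℝ)^2) := by
  have hK : (1:ℝ) ≤ (k:ℝ) := by exact_mod_cast hk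
  have hD : (1:ℝ) ≤ (d:ℝ) := by exact_mod_cast hd
  have hK0 : (0:ℝ) < (k:ℝ) := by linarith
  have hD0 : (0:ℝ) < (d:ℝ) := by linarith
  rcases le_or_gt (d:ℝ) (k:ℝ) with h | h
  · have h1 : 1/((k:ℝ)^2 * d) ≤ 4/(((k:ℝ)+(d:ℝ))^2) := by
      rw [div_le_div_iff₀ (by positivity) (by positivity)]
      nlinarith
    have h2 : (0:ℝ) ≤ 2/((((k:ℝ)+(d:ℝ))) * (k:ℝ)^2) := by positivity
    linarith
  · have h1 : 1/((k:ℝ)^2 * d) ≤ 2/((((k:ℝ)+(d:ℝ))) * (k:ℝ)^2) := by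
      rw [div_le_div_iff₀ (by positivity) (by positivity)]
      nlinarith
    have h2 : (0:ℝ) ≤ 4/(((k:ℝ)+(d:ℝ))^2) := by positivity
    linarith



lemma err_bound (s N : ℕ) (hs : 2 ≤ s) :
    |(∑ k ∈ Ico 1 (N+1), (1/(k:ℝ)^s) * altS 1 (N-k)) - altL 1 * Ppart s N|
      ≤ 8/((N:ℝ)+1) := by
  have e1 : (∑ k ∈ Ico 1 (N+1), (1/(k:ℝ)^s) * altS 1 (N-k)) - altL 1 * Ppart s N
      = ∑ k ∈ Ico 1 (N+1), (1/(k:ℝ)^s) * (altS 1 (N-k) - altL 1) := by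
    rw [Ppart, Finset.mul_sum, ← Finset.sum_sub_distrib]
    refine Finset.sum_congr rfl fun k _ => ?_
    ring
  rw [e1]
  have hbound : ∀ k ∈ Ico 1 (N+1),
      |(1/(k:ℝ)^s) * (altS 1 (N-k) - altL 1)| ≤ 4/(((N:ℝ)+1)^2) + 2/(((N:ℝ)+1) * (k:ℝ)^2) := by
    intro k hk
    rw [mem_Ico] at hk
    have hk1 : 1 ≤ k := hk.1
    have hkN : k ≤ N := by omega
    have hrem : |altS 1 (N-k) - altL 1| ≤ 1/(((N-k:ℕ):ℝ)+1) := by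
      have := altS_rem 1 (N-k) le_rfl
      rwa [pow_one] at this
    have habs : |(1/(k:ℝ)^s) * (altS 1 (N-k) - altL 1)| ≤ (1/(k:ℝ)^2) * (1/(((N-k:ℕ):ℝ)+1)) := by
      rw [abs_mul, abs_of_nonneg (by positivity : (0:ℝ) ≤ 1/(k:ℝ)^s)]
      exact mul_le_mul (pow_s_le_sq s k hs hk1) hrem (abs_nonneg _) (by positivity)
    refine le_trans habs ?_
    have hc : (k:ℝ) + (((N-k)+1 : ℕ):ℝ) = (N:ℝ)+1 := by
      push_cast [Nat.cast_sub hkN]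
      ring
    have := ptwise_bound k ((N-k)+1) hk1 (by omega)
    rw [hc] at this
    calc (1/(k:ℝ)^2) * (1/(((N-k:ℕ):ℝ)+1)) = 1/((k:ℝ)^2 * (((N-k)+1:ℕ):ℝ)) := by
          push_cast; rw [div_mul_div_comm, one_mul]
      _ ≤ _ := this
  calc |∑ k ∈ Ico 1 (N+1), (1/(k:ℝ)^s) * (altS 1 (N-k) - altL 1)|
      ≤ ∑ k ∈ Ico 1 (N+1), |(1/(k:ℝ)^s) * (altS 1 (N-k) - altL 1)| :=
        Finset.abs_sum_le_sum_abs _ _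
    _ ≤ ∑ k ∈ Ico 1 (N+1), (4/(((N:ℝ)+1)^2) + 2/(((N:ℝ)+1) * (k:ℝ)^2)) :=
        Finset.sum_le_sum hbound
    _ ≤ 8/((N:ℝ)+1) := by
        rw [Finset.sum_add_distrib, Finset.sum_const, Nat.card_Ico]
        have hN1 : (0:ℝ) < (N:ℝ)+1 := by positivity
        have t1 : (N+1-1 : ℕ) • (4/(((N:ℝ)+1)^2)) ≤ 4/((N:ℝ)+1) := by
          rw [nsmul_eq_mul]
          have : ((N+1-1:ℕ):ℝ) = (N:ℝ) := by push_cast; ring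
          rw [this, mul_div_assoc', div_le_div_iff₀ (by positivity) hN1]
          nlinarith
        have t2 : ∑ k ∈ Ico 1 (N+1), 2/(((N:ℝ)+1) * (k:ℝ)^2) ≤ 4/((N:ℝ)+1) := by
          have e2 : ∀ k : ℕ, 2/(((N:ℝ)+1) * (k:ℝ)^2) = (2/((N:ℝ)+1)) * (1/(k:ℝ)^2) := by
            intro k
            rw [div_mul_div_comm, mul_one]
          simp only [e2, ← Finset.mul_sum]
          have h2N : (0:ℝ) ≤ 2/((N:ℝ)+1) := by positivity
          calc (2/((N:ℝ)+1)) * ∑ k ∈ Ico 1 (N+1), 1/(k:ℝ)^2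
              ≤ (2/((N:ℝ)+1)) * 2 := by
                exact mul_le_mul_of_nonneg_left (sq_sum_le N) h2N
            _ = 4/((N:ℝ)+1) := by ring
        refine le_trans (add_le_add t1 t2) ?_
        rw [show (8:ℝ)/((N:ℝ)+1) = 4/((N:ℝ)+1) + 4/((N:ℝ)+1) by ring]

lemma A_tendsto (s : ℕ) (hs : 2 ≤ s) :
    Filter.Tendsto (fun N : ℕ => ∑ k ∈ Ico 1 (N+1), (1/(k:ℝ)^s) * altS 1 (N-k)) atTop
      (nhds (altL 1 * PL s)) := by
  have hg : Filter.Tendsto (fun N : ℕ => 8/((N:ℝ)+1)) atTop (nhds 0) := by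
    have h1 : Filter.Tendsto (fun N : ℕ => ((N:ℝ)+1)) atTop atTop :=
      tendsto_atTop_add_const_right _ 1 tendsto_natCast_atTop_atTop
    have h2 := h1.inv_tendsto_atTop
    have := h2.const_mul (8:ℝ)
    simpa [div_eq_mul_inv] using this
  have herr : Filter.Tendsto
      (fun N : ℕ => (∑ k ∈ Ico 1 (N+1), (1/(k:ℝ)^s) * altS 1 (N-k)) - altL 1 * Ppart s N)
      atTop (nhds 0) := by
    refine squeeze_zero_norm (fun N => ?_) hg
    rw [Real.norm_eq_abs]
    exact err_bound s N hs
  have hsum := herr.add ((Ppart_tendsto s hs).const_mul (altL 1))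
  rw [zero_add] at hsum
  have heq : (fun N : ℕ => ((∑ k ∈ Ico 1 (N+1), (1/(k:ℝ)^s) * altS 1 (N-k)) - altL 1 * Ppart s N)
      + altL 1 * Ppart s N) = fun N : ℕ => ∑ k ∈ Ico 1 (N+1), (1/(k:ℝ)^s) * altS 1 (N-k) := by
    funext N; ring
  rwa [heq] at hsum

theorem alternating_double_sum_formula_both (n : ℕ) :
    ∑ a ∈ Finset.range (n + 2), zeta2barB (a + 1) (n + 1 - a + 1) =
      zetaBar 1 * zetaV (n + 2) - zeta2barI 1 (n + 2) := by
  have hs2 : 2 ≤ n+2 := by omega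
  have hB : ∀ a ∈ Finset.range (n+2),
      Filter.Tendsto (fun N : ℕ => ∑ k₂ ∈ Ico 1 (N+1), ∑ k₁ ∈ Ico 1 k₂,
        (-1:ℝ)^(k₁+k₂) / ((k₁:ℝ)^(a+1) * (k₂:ℝ)^(n+1-a+1))) atTop
        (nhds (zeta2barB (a+1) (n+1-a+1))) := by
    intro a _
    obtain ⟨l, hl⟩ := zbB_conv (a+1) (n+1-a+1) (by omega) (by omega)
    have he : zeta2barB (a+1) (n+1-a+1) = l := by
      rw [zeta2barB, plim]
      exact hl.limUnder_eq
    rwa [he]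
  have hsum := tendsto_finset_sum (Finset.range (n+2)) hB
  obtain ⟨lT, hT⟩ := zbI_conv (n+2) hs2
  have hTeq : zeta2barI 1 (n+2) = lT := by
    rw [zeta2barI, plim]
    exact hT.limUnder_eq
  have hV : zetaV (n+2) = PL (n+2) := by
    rw [zetaV, plim]
    exact (Ppart_tendsto (n+2) hs2).limUnder_eq
  have hBar : zetaBar 1 = altL 1 := by
    rw [zetaBar, plim, altL]
    congr 1
  have heq : (fun N : ℕ => ∑ a ∈ Finset.range (n+2), ∑ k₂ ∈ Ico 1 (N+1), ∑ k₁ ∈ Ico 1 k₂,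
        (-1:ℝ)^(k₁+k₂) / ((k₁:ℝ)^(a+1) * (k₂:ℝ)^(n+1-a+1)))
      = fun N : ℕ => (∑ k ∈ Ico 1 (N+1), (1/(k:ℝ)^(n+2)) * altS 1 (N-k))
        - ∑ k₂ ∈ Ico 1 (N+1), ∑ k₁ ∈ Ico 1 k₂, (-1:ℝ)^k₁ / ((k₁:ℝ)^1 * (k₂:ℝ)^(n+2)) :=
    funext (finite_id n)
  have hRHS : Filter.Tendsto (fun N : ℕ => ∑ a ∈ Finset.range (n+2), ∑ k₂ ∈ Ico 1 (N+1),
      ∑ k₁ ∈ Ico 1 k₂, (-1:ℝ)^(k₁+k₂) / ((k₁:ℝ)^(a+1) * (k₂:ℝ)^(n+1-a+1))) atTop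
      (nhds (altL 1 * PL (n+2) - lT)) := by
    rw [heq]
    exact (A_tendsto (n+2) hs2).sub hT
  have hfin := tendsto_nhds_unique hsum hRHS
  rw [hfin, hBar, hV, hTeq]
end
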